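/- arXiv:1109.0336 — 6 statements merged into one kernel-verified Lean document; each statement's English description precedes it below -/
import Mathlib

section
/- Let M be a partial matching of {1,…,n} and suppose (i1,i3) and (i2,i4) are arcs of M with i1<i2<i3<i4 (a crossing pair of arcs). Let M′ be the partial matching obtained from M by deleting the arcs (i1,i3) and (i2,i4) and inserting the arcs (i1,i4) and (i2,i3), all other arcs unchanged. Then the number of crossing pairs of arcs of M′ (pairs of arcs (s,t), (s′,t′) with s<s′<t<t′) is strictly less than the number of crossing pairs of arcs of M. Equivalently, replacing an occurrence of the clan pattern (1,2,1,2) by (1,2,2,1) in a clan strictly decreases the total number of occurrences of the pattern (1,2,1,2). -/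
open Finset Module

noncomputable section

/-- Symbols of an FS-pattern: `+`, `-`, `F` (first occurrence / opener),
`S` (second occurrence / closer). -/
inductive FSSymbol : Type
  | plus : FSSymbol
  | minus : FSSymbol
  | fst : FSSymbol
  | snd : FSSymbol
  deriving DecidableEq

/-- A `(p,q)`-clan on `{1,…,p+q}` (positions are `Fin (p+q)`, `0`-based).
`symbol i = Sum.inl j` means positions `i` and `j` carry the same natural
number (they form an arc), and `symbol i = Sum.inr true` (resp. `false`)
means position `i` carries a `+` (resp. a `-`).  The number of `+`'s minus
the number of `-`'s equals `p - q`. -/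
structure Clan (p q : ℕ) where
  symbol : Fin (p + q) → (Fin (p + q)) ⊕ Bool
  mate_ne : ∀ i j, symbol i = Sum.inl j → j ≠ i
  mate_invol : ∀ i j, symbol i = Sum.inl j → symbol j = Sum.inl i
  balance : (univ.filter fun i => symbol i = Sum.inr true).card + q
      = (univ.filter fun i => symbol i = Sum.inr false).card + p

namespace Clan

variable {p q : ℕ}

/-- `γ(i;+)`: the number of `+` signs and of arcs `(s,t)` with `t ≤ i`
among the first `i` positions (`i` is `1`-based). -/
def cplus (γ : Clan p q) (i : ℕ) : ℕ :=
  (univ.filter fun k : Fin (p + q) =>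
    k.val < i ∧ (γ.symbol k = Sum.inr true ∨ ∃ j, γ.symbol k = Sum.inl j ∧ j < k)).card

/-- `γ(i;-)`: the number of `-` signs and of arcs `(s,t)` with `t ≤ i`
among the first `i` positions (`i` is `1`-based). -/
def cminus (γ : Clan p q) (i : ℕ) : ℕ :=
  (univ.filter fun k : Fin (p + q) =>
    k.val < i ∧ (γ.symbol k = Sum.inr false ∨ ∃ j, γ.symbol k = Sum.inl j ∧ j < k)).card

/-- `γ(i;j)`: the number of arcs `(s,t)` with `s ≤ i < j < t`
(`i`, `j` are `1`-based). -/
def cpair (γ : Clan p q) (i j : ℕ) : ℕ :=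
  (univ.filter fun s : Fin (p + q) =>
    s.val < i ∧ ∃ t, γ.symbol s = Sum.inl t ∧ s < t ∧ j ≤ t.val).card

/-- The FS-pattern of a clan: signs stay, openers become `F`, closers `S`. -/
def FS (γ : Clan p q) (i : Fin (p + q)) : FSSymbol :=
  match γ.symbol i with
  | Sum.inr true => FSSymbol.plus
  | Sum.inr false => FSSymbol.minus
  | Sum.inl j => if j < i then FSSymbol.snd else FSSymbol.fst

/-- A clan avoids the pattern `(1,2,1,2)` iff no two of its arcs cross. -/
def Avoids1212 (γ : Clan p q) : Prop :=
  ¬ ∃ i1 i2 i3 i4 : Fin (p + q), i1 < i2 ∧ i2 < i3 ∧ i3 < i4 ∧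
      γ.symbol i1 = Sum.inl i3 ∧ γ.symbol i2 = Sum.inl i4

/-- `γ₊`: positions carrying a `+` or the second occurrence of a number. -/
def plusSet (γ : Clan p q) : Finset (Fin (p + q)) :=
  univ.filter fun i => γ.symbol i = Sum.inr true ∨ ∃ j, γ.symbol i = Sum.inl j ∧ j < i

/-- `γ̃₊`: positions carrying a `+` or the first occurrence of a number. -/
def tplusSet (γ : Clan p q) : Finset (Fin (p + q)) :=
  univ.filter fun i => γ.symbol i = Sum.inr true ∨ ∃ j, γ.symbol i = Sum.inl j ∧ i < j

end Clan

/-- The rank matrix `r_w(i,j) = #{k ≤ i : w(k) ≤ j}` (`i`, `j` are `1`-based). -/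
def rankMatrix {n : ℕ} (w : Equiv.Perm (Fin n)) (i j : ℕ) : ℕ :=
  (univ.filter fun k : Fin n => k.val < i ∧ (w k).val < j).card

/-- `u` is the permutation `u(γ)`: it assigns the values `p, p-1, …, 1` to the
positions of `γ₊` taken in increasing order, and `n, n-1, …, p+1` to the
positions of `γ₋` taken in increasing order (values are `0`-based, so the
`1`-based value of `u` at `i` is `(u i).val + 1`). -/
def IsUPerm {p q : ℕ} (γ : Clan p q) (u : Equiv.Perm (Fin (p + q))) : Prop :=
  ∀ i : Fin (p + q),
    (i ∈ γ.plusSet → (u i).val + 1 + (γ.plusSet.filter fun j => j < i).card = p) ∧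
    (i ∉ γ.plusSet →
      (u i).val + 1 + (univ.filter fun j => j ∉ γ.plusSet ∧ j < i).card = p + q)

/-- `v` is the permutation `v(γ)`: it assigns the values `1, …, p` to the
positions of `γ̃₊` taken in increasing order, and `p+1, …, n` to the
positions of `γ̃₋` taken in increasing order (values are `0`-based). -/
def IsVPerm {p q : ℕ} (γ : Clan p q) (v : Equiv.Perm (Fin (p + q))) : Prop :=
  ∀ i : Fin (p + q),
    (i ∈ γ.tplusSet → (v i).val = (γ.tplusSet.filter fun j => j < i).card) ∧
    (i ∉ γ.tplusSet →
      (v i).val = p + (univ.filter fun j => j ∉ γ.tplusSet ∧ j < i).card)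

/-- `E_j ⊆ ℂⁿ`: the span of the first `j` standard basis vectors, realized as
the subspace of vectors vanishing in coordinates `≥ j`. -/
def Efirst (n j : ℕ) : Submodule ℂ (Fin n → ℂ) :=
  ⨅ k ∈ {k : Fin n | j ≤ k.val}, LinearMap.ker (LinearMap.proj k : (Fin n → ℂ) →ₗ[ℂ] ℂ)

/-- `Ẽ_j ⊆ ℂⁿ`: the span of the last `j` standard basis vectors, realized as
the subspace of vectors vanishing in coordinates `< n - j`. -/
def Elast (n j : ℕ) : Submodule ℂ (Fin n → ℂ) :=
  ⨅ k ∈ {k : Fin n | k.val < n - j}, LinearMap.ker (LinearMap.proj k : (Fin n → ℂ) →ₗ[ℂ] ℂ)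

/-- The projection `π : ℂⁿ → E_p` with kernel `Ẽ_q` (for `n = p + q`). -/
def projE (n p : ℕ) : (Fin n → ℂ) →ₗ[ℂ] (Fin n → ℂ) where
  toFun v := fun k => if k.val < p then v k else 0
  map_add' u v := by funext k; by_cases h : k.val < p <;> simp [h]
  map_smul' c v := by funext k; by_cases h : k.val < p <;> simp [h]

/-- A complete flag `F_0 ⊂ F_1 ⊂ ⋯ ⊂ F_n` in `ℂⁿ`, `dim F_i = i`. -/
structure CompleteFlag (n : ℕ) where
  F : Fin (n + 1) → Submodule ℂ (Fin n → ℂ)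
  mono : Monotone F
  finrank_eq : ∀ i, finrank ℂ ↥(F i) = i.val

/-- Membership of a complete flag in the set `Q_γ`: the three linear-algebraic
conditions of Theorem `orbit_description`. -/
def MemQ {p q : ℕ} (γ : Clan p q) (Fl : CompleteFlag (p + q)) : Prop :=
  (∀ i : ℕ, 1 ≤ i → ∀ hi : i ≤ p + q,
      finrank ℂ ↥(Fl.F ⟨i, by omega⟩ ⊓ Efirst (p + q) p) = γ.cplus i ∧
      finrank ℂ ↥(Fl.F ⟨i, by omega⟩ ⊓ Elast (p + q) q) = γ.cminus i) ∧
  (∀ i j : ℕ, 1 ≤ i → ∀ hij : i < j, ∀ hj : j ≤ p + q,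
      finrank ℂ ↥((Fl.F ⟨i, by omega⟩).map (projE (p + q) p) ⊔ Fl.F ⟨j, by omega⟩)
        = j + γ.cpair i j)

/-- Membership in `K = GL(p,ℂ) × GL(q,ℂ)`, the block-diagonal subgroup of
`GL(p+q, ℂ)`: all entries mixing the first `p` and last `q` coordinates
vanish. -/
def InK (p q : ℕ) (g : (Matrix (Fin (p + q)) (Fin (p + q)) ℂ)ˣ) : Prop :=
  ∀ i j : Fin (p + q), ¬(i.val < p ↔ j.val < p) →
    (g : Matrix (Fin (p + q)) (Fin (p + q)) ℂ) i j = 0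

/-- `Fl' = g · Fl`: the flag `Fl'` is obtained by applying the invertible
matrix `g` to each subspace of the flag `Fl`. -/
def FlagMapsTo {n : ℕ} (g : (Matrix (Fin n) (Fin n) ℂ)ˣ) (Fl Fl' : CompleteFlag n) : Prop :=
  ∀ i, Fl'.F i = (Fl.F i).map (Matrix.mulVecLin (g : Matrix (Fin n) (Fin n) ℂ))

/-- A partial matching of `{1,…,n}`, given by its set of arcs `(s,t)`, `s < t`;
distinct arcs are disjoint. -/
def IsPartialMatching {n : ℕ} (M : Finset (Fin n × Fin n)) : Prop :=
  (∀ a ∈ M, a.1 < a.2) ∧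
  ∀ a ∈ M, ∀ b ∈ M, a ≠ b → a.1 ≠ b.1 ∧ a.1 ≠ b.2 ∧ a.2 ≠ b.1 ∧ a.2 ≠ b.2

/-- The number of crossing pairs of arcs of `M` (each crossing pair counted
once, ordered by its smaller opener). -/
def crossNum {n : ℕ} (M : Finset (Fin n × Fin n)) : ℕ :=
  ((M ×ˢ M).filter fun ab =>
    ab.1.1 < ab.2.1 ∧ ab.2.1 < ab.1.2 ∧ ab.1.2 < ab.2.2).card

/-- `M` is a noncrossing partial matching whose openers are exactly the
`F`-positions of the pattern `d` and whose closers are exactly the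
`S`-positions of `d`. -/
def MatchesPattern {n : ℕ} (d : Fin n → FSSymbol) (M : Finset (Fin n × Fin n)) : Prop :=
  IsPartialMatching M ∧
  (∀ i : Fin n, (∃ t, (i, t) ∈ M) ↔ d i = FSSymbol.fst) ∧
  (∀ i : Fin n, (∃ s, (s, i) ∈ M) ↔ d i = FSSymbol.snd) ∧
  ¬ ∃ a ∈ M, ∃ b ∈ M, a.1 < b.1 ∧ b.1 < a.2 ∧ a.2 < b.2

/-- The values `{w(1),…,w(i)}` arranged in increasing order. -/
def sortedPrefix {n : ℕ} (w : Equiv.Perm (Fin n)) (i : ℕ) : List (Fin n) :=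
  Finset.sort ((univ.filter fun k : Fin n => k.val < i).image w) (· ≤ ·)



/-- Crossing indicator for a pair of arcs. -/
def chiCross {n : ℕ} (x y : Fin n × Fin n) : ℕ :=
  if x.1.val < y.1.val ∧ y.1.val < x.2.val ∧ x.2.val < y.2.val then 1 else 0

lemma crossNum_eq_sum {n : ℕ} (M : Finset (Fin n × Fin n)) :
    crossNum M = ∑ x ∈ M, ∑ y ∈ M, chiCross x y := by
  rw [crossNum, Finset.card_filter, Finset.sum_product]
  simp only [chiCross, Fin.lt_def]

lemma sum_expand {α : Type*} [DecidableEq α] (R : Finset α) (u v : α)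
    (hu : u ∉ R) (hv : v ∉ R) (huv : u ≠ v) (f : α → α → ℕ) :
    ∑ x ∈ R ∪ {u, v}, ∑ y ∈ R ∪ {u, v}, f x y
      = (∑ x ∈ R, ∑ y ∈ R, f x y) + (∑ x ∈ R, (f x u + f x v + f u x + f v x))
        + (f u u + f u v + f v u + f v v) := by
  have h1 : R ∪ {u, v} = insert u (insert v R) := by
    ext z; simp [Finset.mem_union, Finset.mem_insert]
  have hu' : u ∉ insert v R := by simp [huv, hu]
  rw [h1]
  simp only [Finset.sum_insert hu', Finset.sum_insert hv, Finset.sum_add_distrib]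
  ring

lemma key_uncross (s t a b c d : ℕ) (hst : s < t) (hab : a < b) (hbc : b < c) (hcd : c < d)
    (h1 : s ≠ a) (h2 : s ≠ b) (h3 : s ≠ c) (h4 : s ≠ d)
    (h5 : t ≠ a) (h6 : t ≠ b) (h7 : t ≠ c) (h8 : t ≠ d) :
    (if s < a ∧ a < t ∧ t < d then 1 else 0) + (if s < b ∧ b < t ∧ t < c then 1 else 0)
      + (if a < s ∧ s < d ∧ d < t then 1 else 0) + (if b < s ∧ s < c ∧ c < t then 1 else 0)
    ≤ (if s < a ∧ a < t ∧ t < c then 1 else 0) + (if s < b ∧ b < t ∧ t < d then 1 else 0)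
      + (if a < s ∧ s < c ∧ c < t then 1 else 0) + (if b < s ∧ s < d ∧ d < t then 1 else 0) := by
  split_ifs <;> omega

/-- Uncrossing a crossing pair of arcs of a partial matching
(replacing arcs `(i1,i3)`, `(i2,i4)`, `i1<i2<i3<i4`, by `(i1,i4)`, `(i2,i3)`)
strictly decreases the number of crossing pairs of arcs. -/
theorem crossNum_lt_of_uncross {n : ℕ} (M : Finset (Fin n × Fin n))
    (hM : IsPartialMatching M) (i1 i2 i3 i4 : Fin n)
    (h12 : i1 < i2) (h23 : i2 < i3) (h34 : i3 < i4)
    (ha : (i1, i3) ∈ M) (hb : (i2, i4) ∈ M) :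
    crossNum ((M \ {(i1, i3), (i2, i4)}) ∪ {(i1, i4), (i2, i3)}) < crossNum M := by
  classical
  set A : Fin n × Fin n := (i1, i3) with hA
  set B : Fin n × Fin n := (i2, i4) with hB
  set A' : Fin n × Fin n := (i1, i4) with hA'
  set B' : Fin n × Fin n := (i2, i3) with hB'
  have hne12 : i1 ≠ i2 := Fin.ne_of_lt h12
  have hne34 : i3 ≠ i4 := Fin.ne_of_lt h34
  have hne23 : i2 ≠ i3 := Fin.ne_of_lt h23
  have hAB : A ≠ B := fun h => hne12 (congrArg Prod.fst h)
  have hA'B' : A' ≠ B' := fun h => hne12 (congrArg Prod.fst h)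
  set R : Finset (Fin n × Fin n) := M \ {A, B} with hR
  have hAnotR : A ∉ R := by simp [hR]
  have hBnotR : B ∉ R := by simp [hR]
  have hA'M : A' ∉ M := by
    intro h
    have hne : A' ≠ A := fun h' => hne34 ((congrArg Prod.snd h').symm)
    exact (hM.2 A' h A ha hne).1 rfl
  have hB'M : B' ∉ M := by
    intro h
    have hne : B' ≠ B := fun h' => hne34 (congrArg Prod.snd h')
    exact (hM.2 B' h B hb hne).1 rfl
  have hA'notR : A' ∉ R := fun h => hA'M (Finset.mem_sdiff.mp h).1
  have hB'notR : B' ∉ R := fun h => hB'M (Finset.mem_sdiff.mp h).1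
  have hMeq : M = R ∪ {A, B} := by
    rw [hR, Finset.sdiff_union_self_eq_union]
    refine (Finset.union_eq_left.mpr ?_).symm
    simp [Finset.insert_subset_iff, ha, hb]
  rw [crossNum_eq_sum, crossNum_eq_sum]
  conv_rhs => rw [hMeq]
  rw [sum_expand R A' B' hA'notR hB'notR hA'B' chiCross,
      sum_expand R A B hAnotR hBnotR hAB chiCross]
  have h12' : i1.val < i2.val := h12
  have h23' : i2.val < i3.val := h23
  have h34' : i3.val < i4.val := h34
  have hCnew : chiCross A' A' + chiCross A' B' + chiCross B' A' + chiCross B' B' = 0 := by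
    simp only [chiCross, hA', hB']
    split_ifs <;> omega
  have hCold : chiCross A A + chiCross A B + chiCross B A + chiCross B B = 1 := by
    simp only [chiCross, hA, hB]
    split_ifs <;> omega
  have hS : (∑ x ∈ R, (chiCross x A' + chiCross x B' + chiCross A' x + chiCross B' x))
      ≤ ∑ x ∈ R, (chiCross x A + chiCross x B + chiCross A x + chiCross B x) := by
    refine Finset.sum_le_sum fun x hx => ?_
    have hxM : x ∈ M := (Finset.mem_sdiff.mp hx).1
    have hxAB : x ∉ ({A, B} : Finset _) := (Finset.mem_sdiff.mp hx).2
    have hxA : x ≠ A := fun h => hxAB (by simp [h])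
    have hxB : x ≠ B := fun h => hxAB (by simp [h])
    have hst : x.1 < x.2 := hM.1 x hxM
    obtain ⟨d1, d2, d3, d4⟩ := hM.2 x hxM A ha hxA
    obtain ⟨e1, e2, e3, e4⟩ := hM.2 x hxM B hb hxB
    have vne : ∀ a b : Fin n, a ≠ b → a.val ≠ b.val := fun a b h h' => h (Fin.ext h')
    simp only [chiCross, hA, hB, hA', hB']
    exact key_uncross x.1.val x.2.val i1.val i2.val i3.val i4.val hst h12' h23' h34'
      (vne _ _ d1) (vne _ _ e1) (vne _ _ d2) (vne _ _ e2)
      (vne _ _ d3) (vne _ _ e3) (vne _ _ d4) (vne _ _ e4)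
  omega
end
end

section
/- Let γ be a (p,q)-clan, n = p+q, and let W⁺ = { w ∈ S_n : r_w(i,p) = γ(i;+) for all i = 1,…,n }. Then u(γ) ∈ W⁺, and u(γ) is the unique maximal element of W⁺ in the Bruhat order; that is, for every w ∈ W⁺ and all i,j ∈ {1,…,n} one has r_w(i,j) ≥ r_{u(γ)}(i,j). -/
open Finset Module

noncomputable section

section UPermAux

open Finset

private lemma card_filter_val_mem (n a b : ℕ) :
    ((univ : Finset (Fin n)).filter fun k => a ≤ k.val ∧ k.val < b).card = min b n - a := by
  rw [← Finset.card_image_of_injective _ Fin.val_injective]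
  have himg : Finset.image Fin.val ((univ : Finset (Fin n)).filter fun k => a ≤ k.val ∧ k.val < b)
      = Finset.Ico a (min b n) := by
    ext m
    simp only [Finset.mem_image, Finset.mem_filter, Finset.mem_univ, true_and,
      Finset.mem_Ico, lt_min_iff]
    constructor
    · rintro ⟨k, ⟨h1, h2⟩, rfl⟩
      exact ⟨h1, h2, k.isLt⟩
    · rintro ⟨h1, h2, h3⟩
      exact ⟨⟨m, h3⟩, ⟨h1, h2⟩, rfl⟩
  rw [himg, Nat.card_Ico]

private lemma card_filter_val_lt (n b : ℕ) :
    ((univ : Finset (Fin n)).filter fun k => k.val < b).card = min b n := by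
  have h := card_filter_val_mem n 0 b
  simpa using h

/-- Bound the cardinality of a set of positions by the size of the interval containing
their images under an injective map. -/
private lemma card_le_interval {n : ℕ} (w : Equiv.Perm (Fin n)) (s : Finset (Fin n)) (a b : ℕ)
    (h : ∀ k ∈ s, a ≤ (w k).val ∧ (w k).val < b) :
    s.card ≤ min b n - a := by
  calc s.card ≤ ((univ : Finset (Fin n)).filter fun m => a ≤ m.val ∧ m.val < b).card := by
        refine Finset.card_le_card_of_injOn w (fun k hk => ?_) w.injective.injOn
        simp only [Finset.mem_coe, Finset.mem_filter, Finset.mem_univ, true_and]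
        exact h k hk
    _ = min b n - a := card_filter_val_mem n a b

private lemma card_filter_and_split {n : ℕ} (P Q : Fin n → Prop)
    [DecidablePred P] [DecidablePred Q] :
    ((univ : Finset (Fin n)).filter fun k => P k ∧ Q k).card
      + ((univ : Finset (Fin n)).filter fun k => P k ∧ ¬ Q k).card
      = ((univ : Finset (Fin n)).filter P).card := by
  classical
  rw [← Finset.filter_filter, ← Finset.filter_filter,
    Finset.card_filter_add_card_filter_not]

/-- mate of a matched position; junk value (itself) on signed positions. -/
private def clanMate {p q : ℕ} (γ : Clan p q) (i : Fin (p + q)) : Fin (p + q) :=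
  match γ.symbol i with
  | Sum.inl j => j
  | Sum.inr _ => i

private lemma clanMate_eq {p q : ℕ} (γ : Clan p q) {i j : Fin (p + q)}
    (h : γ.symbol i = Sum.inl j) : clanMate γ i = j := by
  simp [clanMate, h]

private lemma closers_card_eq_openers {p q : ℕ} (γ : Clan p q) :
    ((univ : Finset (Fin (p+q))).filter fun i => ∃ j, γ.symbol i = Sum.inl j ∧ j < i).card
      = ((univ : Finset (Fin (p+q))).filter fun i => ∃ j, γ.symbol i = Sum.inl j ∧ i < j).card := by
  classical
  refine Finset.card_nbij' (clanMate γ) (clanMate γ) ?_ ?_ ?_ ?_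
  · intro k hk
    simp only [Finset.mem_coe, Finset.mem_filter, Finset.mem_univ, true_and] at hk ⊢
    obtain ⟨j, hj, hlt⟩ := hk
    rw [clanMate_eq γ hj]
    exact ⟨k, γ.mate_invol k j hj, hlt⟩
  · intro k hk
    simp only [Finset.mem_coe, Finset.mem_filter, Finset.mem_univ, true_and] at hk ⊢
    obtain ⟨j, hj, hlt⟩ := hk
    rw [clanMate_eq γ hj]
    exact ⟨k, γ.mate_invol k j hj, hlt⟩
  · intro k hk
    simp only [Finset.mem_coe, Finset.mem_filter, Finset.mem_univ, true_and] at hk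
    obtain ⟨j, hj, hlt⟩ := hk
    rw [clanMate_eq γ hj, clanMate_eq γ (γ.mate_invol k j hj)]
  · intro k hk
    simp only [Finset.mem_coe, Finset.mem_filter, Finset.mem_univ, true_and] at hk
    obtain ⟨j, hj, hlt⟩ := hk
    rw [clanMate_eq γ hj, clanMate_eq γ (γ.mate_invol k j hj)]

private lemma clan_plusSet_card {p q : ℕ} (γ : Clan p q) : γ.plusSet.card = p := by
  classical
  have hdisj1 : Disjoint ((univ : Finset (Fin (p+q))).filter fun i => γ.symbol i = Sum.inr true)
      ((univ : Finset (Fin (p+q))).filter fun i => ∃ j, γ.symbol i = Sum.inl j ∧ j < i) := by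
    rw [Finset.disjoint_left]
    intro k h1 h2
    simp only [Finset.mem_filter, Finset.mem_univ, true_and] at h1 h2
    obtain ⟨j, hj, _⟩ := h2
    rw [h1] at hj
    exact nomatch hj
  have h1 : γ.plusSet.card
      = ((univ : Finset (Fin (p+q))).filter fun i => γ.symbol i = Sum.inr true).card
      + ((univ : Finset (Fin (p+q))).filter fun i => ∃ j, γ.symbol i = Sum.inl j ∧ j < i).card := by
    rw [← Finset.card_union_of_disjoint hdisj1]
    congr 1
    ext k
    simp only [Clan.plusSet, Finset.mem_filter, Finset.mem_univ, true_and, Finset.mem_union]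
  have hdisj2 : Disjoint ((univ : Finset (Fin (p+q))).filter fun i => γ.symbol i = Sum.inr false)
      ((univ : Finset (Fin (p+q))).filter fun i => ∃ j, γ.symbol i = Sum.inl j ∧ i < j) := by
    rw [Finset.disjoint_left]
    intro k h1 h2
    simp only [Finset.mem_filter, Finset.mem_univ, true_and] at h1 h2
    obtain ⟨j, hj, _⟩ := h2
    rw [h1] at hj
    exact nomatch hj
  have h2 : ((univ : Finset (Fin (p+q))).filter fun i => i ∉ γ.plusSet).card
      = ((univ : Finset (Fin (p+q))).filter fun i => γ.symbol i = Sum.inr false).card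
      + ((univ : Finset (Fin (p+q))).filter fun i => ∃ j, γ.symbol i = Sum.inl j ∧ i < j).card := by
    rw [← Finset.card_union_of_disjoint hdisj2]
    congr 1
    ext k
    simp only [Clan.plusSet, Finset.mem_filter, Finset.mem_univ, true_and, Finset.mem_union]
    rcases h : γ.symbol k with j | b
    · have hne : j ≠ k := γ.mate_ne k j h
      have hvne : j.val ≠ k.val := fun hh => hne (Fin.ext hh)
      constructor
      · intro hnot
        refine Or.inr ⟨j, rfl, ?_⟩
        have h1 : ¬ j < k := fun hlt => hnot (Or.inr ⟨j, rfl, hlt⟩)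
        rw [Fin.lt_def] at h1 ⊢
        omega
      · rintro (hfalse | ⟨j', hj', hlt⟩) hcon
        · exact nomatch hfalse
        · have hjj : j = j' := by injection hj'
          subst hjj
          rcases hcon with htrue | ⟨j'', hj'', hlt'⟩
          · exact nomatch htrue
          · have hjj' : j = j'' := by injection hj''
            subst hjj'
            rw [Fin.lt_def] at hlt hlt'
            omega
    · cases b <;> simp
  have h3 : γ.plusSet.card + ((univ : Finset (Fin (p+q))).filter fun i => i ∉ γ.plusSet).card
      = p + q := by
    have hh := Finset.card_filter_add_card_filter_not
      (s := (univ : Finset (Fin (p+q)))) (p := fun i => i ∈ γ.plusSet)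
    have hmem : (univ : Finset (Fin (p+q))).filter (fun i => i ∈ γ.plusSet) = γ.plusSet := by
      ext k; simp
    rw [hmem] at hh
    simpa using hh
  have h4 := closers_card_eq_openers γ
  have h5 := γ.balance
  omega

private lemma uPerm_lt_p_iff {p q : ℕ} (γ : Clan p q) (u : Equiv.Perm (Fin (p + q)))
    (hu : IsUPerm γ u) (k : Fin (p + q)) :
    (u k).val < p ↔ k ∈ γ.plusSet := by
  classical
  constructor
  · intro h
    by_contra hk
    have h2 := (hu k).2 hk
    have hsub : insert k ((univ : Finset (Fin (p+q))).filter fun m => m ∉ γ.plusSet ∧ m < k)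
        ⊆ (univ : Finset (Fin (p+q))).filter fun m => m ∉ γ.plusSet := by
      intro m hm
      rcases Finset.mem_insert.1 hm with rfl | hm
      · simp [hk]
      · simp only [Finset.mem_filter, Finset.mem_univ, true_and] at hm ⊢
        exact hm.1
    have hcard := Finset.card_le_card hsub
    rw [Finset.card_insert_of_notMem (by simp)] at hcard
    have hq : ((univ : Finset (Fin (p+q))).filter fun m => m ∉ γ.plusSet).card = q := by
      have hh := Finset.card_filter_add_card_filter_not
        (s := (univ : Finset (Fin (p+q)))) (p := fun i => i ∈ γ.plusSet)
      have hmem : (univ : Finset (Fin (p+q))).filter (fun i => i ∈ γ.plusSet) = γ.plusSet := by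
        ext m; simp
      rw [hmem, clan_plusSet_card γ] at hh
      simpa using hh
    omega
  · intro hk
    have h1 := (hu k).1 hk
    omega

end UPermAux


/-- `u(γ)` lies in
`W⁺ = {w : r_w(i,p) = γ(i;+) for all i}` and is its unique maximal element in
the Bruhat order: every `w ∈ W⁺` satisfies `r_w(i,j) ≥ r_{u(γ)}(i,j)`. -/
theorem uPerm_max_of_Wplus {p q : ℕ} (hn : 1 ≤ p + q) (γ : Clan p q)
    (u : Equiv.Perm (Fin (p + q))) (hu : IsUPerm γ u) :
    (∀ i : ℕ, 1 ≤ i → i ≤ p + q → rankMatrix u i p = γ.cplus i) ∧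
    (∀ w : Equiv.Perm (Fin (p + q)),
      (∀ i : ℕ, 1 ≤ i → i ≤ p + q → rankMatrix w i p = γ.cplus i) →
      ∀ i j : ℕ, 1 ≤ i → i ≤ p + q → 1 ≤ j → j ≤ p + q →
        rankMatrix u i j ≤ rankMatrix w i j) := by
  classical
  have hpred : ∀ k : Fin (p + q), ((u k).val < p ↔
      (γ.symbol k = Sum.inr true ∨ ∃ j, γ.symbol k = Sum.inl j ∧ j < k)) := by
    intro k
    have := uPerm_lt_p_iff γ u hu k
    simpa [Clan.plusSet] using this
  have part1 : ∀ i : ℕ, 1 ≤ i → i ≤ p + q → rankMatrix u i p = γ.cplus i := by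
    intro i _ _
    unfold rankMatrix Clan.cplus
    congr 1
    apply Finset.filter_congr
    intro k _
    have := hpred k
    constructor
    · rintro ⟨h1, h2⟩; exact ⟨h1, this.1 h2⟩
    · rintro ⟨h1, h2⟩; exact ⟨h1, this.2 h2⟩
  refine ⟨part1, ?_⟩
  intro w hw i j hi1 hin hj1 hjn
  -- abbreviations for the two prefix counts
  have ha : γ.cplus i
      = ((univ : Finset (Fin (p+q))).filter fun k => k.val < i ∧ k ∈ γ.plusSet).card := by
    unfold Clan.cplus
    congr 1
    apply Finset.filter_congr
    intro k _
    simp [Clan.plusSet]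
  have hT : ((univ : Finset (Fin (p+q))).filter fun k => k.val < i).card = i := by
    rw [card_filter_val_lt]; omega
  -- split of rank matrix of u at (i,j) by membership in plusSet
  have hsplitU := card_filter_and_split (n := p + q)
    (fun k => k.val < i ∧ (u k).val < j) (fun k => k ∈ γ.plusSet)
  have hrU : ((univ : Finset (Fin (p+q))).filter fun k => k.val < i ∧ (u k).val < j).card
      = rankMatrix u i j := rfl
  -- split of i by membership in plusSet
  have hsplitI := card_filter_and_split (n := p + q)
    (fun k => k.val < i) (fun k => k ∈ γ.plusSet)
  have haI : ((univ : Finset (Fin (p+q))).filter fun k => (k.val < i) ∧ k ∈ γ.plusSet).card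
      = γ.cplus i := ha.symm
  -- bound for the plusSet part of u
  have hx1 : ((univ : Finset (Fin (p+q))).filter fun k =>
        (k.val < i ∧ (u k).val < j) ∧ k ∈ γ.plusSet).card
      ≤ min (min j p) (p + q)
        - (p - ((univ : Finset (Fin (p+q))).filter fun k => (k.val < i) ∧ k ∈ γ.plusSet).card) := by
    apply card_le_interval u
    intro k hk
    simp only [Finset.mem_filter, Finset.mem_univ, true_and] at hk
    obtain ⟨⟨hk1, hk2⟩, hk3⟩ := hk
    have heq := (hu k).1 hk3
    have hsub : insert k (γ.plusSet.filter fun m => m < k)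
        ⊆ (univ : Finset (Fin (p+q))).filter fun m => (m.val < i) ∧ m ∈ γ.plusSet := by
      intro m hm
      rcases Finset.mem_insert.1 hm with rfl | hm
      · exact Finset.mem_filter.2 ⟨Finset.mem_univ _, hk1, hk3⟩
      · rw [Finset.mem_filter] at hm
        refine Finset.mem_filter.2 ⟨Finset.mem_univ _, ?_, hm.1⟩
        have : m.val < k.val := hm.2
        omega
    have hcard := Finset.card_le_card hsub
    rw [Finset.card_insert_of_notMem (by simp)] at hcard
    constructor
    · omega
    · have := (u k).isLt
      omega
  -- bound for the complement part of u
  have hx2 : ((univ : Finset (Fin (p+q))).filter fun k =>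
        (k.val < i ∧ (u k).val < j) ∧ ¬ k ∈ γ.plusSet).card
      ≤ min (min j (p + q)) (p + q)
        - ((p + q) - ((univ : Finset (Fin (p+q))).filter fun k =>
            (k.val < i) ∧ ¬ k ∈ γ.plusSet).card) := by
    apply card_le_interval u
    intro k hk
    simp only [Finset.mem_filter, Finset.mem_univ, true_and] at hk
    obtain ⟨⟨hk1, hk2⟩, hk3⟩ := hk
    have heq := (hu k).2 hk3
    have hsub : insert k ((univ : Finset (Fin (p+q))).filter fun m => m ∉ γ.plusSet ∧ m < k)
        ⊆ (univ : Finset (Fin (p+q))).filter fun m => (m.val < i) ∧ ¬ m ∈ γ.plusSet := by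
      intro m hm
      rcases Finset.mem_insert.1 hm with rfl | hm
      · exact Finset.mem_filter.2 ⟨Finset.mem_univ _, hk1, hk3⟩
      · rw [Finset.mem_filter] at hm
        refine Finset.mem_filter.2 ⟨Finset.mem_univ _, ?_, hm.2.1⟩
        have : m.val < k.val := hm.2.2
        omega
    have hcard := Finset.card_le_card hsub
    rw [Finset.card_insert_of_notMem (by simp)] at hcard
    constructor
    · omega
    · have := (u k).isLt
      omega
  -- now the w side
  have hwa : ((univ : Finset (Fin (p+q))).filter fun k => k.val < i ∧ (w k).val < p).card
      = γ.cplus i := hw i hi1 hin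
  -- split of rank matrix of w at (i,j) by (w k).val < p
  have hsplitW := card_filter_and_split (n := p + q)
    (fun k => k.val < i ∧ (w k).val < j) (fun k => (w k).val < p)
  have hrW : ((univ : Finset (Fin (p+q))).filter fun k => k.val < i ∧ (w k).val < j).card
      = rankMatrix w i j := rfl
  -- split of i by (w k).val < p
  have hsplitIW := card_filter_and_split (n := p + q)
    (fun k => k.val < i) (fun k => (w k).val < p)
  -- split of the count a by (w k).val < j
  have hsplitA := card_filter_and_split (n := p + q)
    (fun k => k.val < i ∧ (w k).val < p) (fun k => (w k).val < j)
  -- split of the count b by (w k).val < j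
  have hsplitB := card_filter_and_split (n := p + q)
    (fun k => (k.val < i) ∧ ¬ (w k).val < p) (fun k => (w k).val < j)
  -- reorder conjunctions
  have hre1 : ((univ : Finset (Fin (p+q))).filter fun k =>
        (k.val < i ∧ (w k).val < p) ∧ (w k).val < j).card
      = ((univ : Finset (Fin (p+q))).filter fun k =>
        (k.val < i ∧ (w k).val < j) ∧ (w k).val < p).card := by
    congr 1
    ext k
    simp only [Finset.mem_filter, Finset.mem_univ, true_and]
    tauto
  have hre2 : ((univ : Finset (Fin (p+q))).filter fun k =>
        ((k.val < i) ∧ ¬ (w k).val < p) ∧ (w k).val < j).card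
      = ((univ : Finset (Fin (p+q))).filter fun k =>
        (k.val < i ∧ (w k).val < j) ∧ ¬ (w k).val < p).card := by
    congr 1
    ext k
    simp only [Finset.mem_filter, Finset.mem_univ, true_and]
    tauto
  -- bounds on the discarded parts
  have hz1 : ((univ : Finset (Fin (p+q))).filter fun k =>
        (k.val < i ∧ (w k).val < p) ∧ ¬ (w k).val < j).card ≤ min p (p + q) - j := by
    apply card_le_interval w
    intro k hk
    simp only [Finset.mem_filter, Finset.mem_univ, true_and, not_lt] at hk
    exact ⟨hk.2, hk.1.2⟩
  have hz2 : ((univ : Finset (Fin (p+q))).filter fun k =>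
        ((k.val < i) ∧ ¬ (w k).val < p) ∧ ¬ (w k).val < j).card ≤ min (p + q) (p + q) - j := by
    apply card_le_interval w
    intro k hk
    simp only [Finset.mem_filter, Finset.mem_univ, true_and, not_lt] at hk
    exact ⟨hk.2, (w k).isLt⟩
  -- u side members also within plusSet count:
  have hcplusI : γ.cplus i ≤ i := by
    rw [ha]
    calc ((univ : Finset (Fin (p+q))).filter fun k => k.val < i ∧ k ∈ γ.plusSet).card
        ≤ ((univ : Finset (Fin (p+q))).filter fun k => k.val < i).card :=
          Finset.card_le_card (Finset.monotone_filter_right _ (fun k _ hk => hk.1))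
      _ = i := hT
  rw [← hrU, ← hrW]
  omega
end
end

section
/- Let γ be a (p,q)-clan, n = p+q, let w₀ ∈ S_n be the longest element (w₀(i) = n+1−i), and let W⁻ = { w ∈ S_n : r_{w₀w}(i,q) = γ(i;−) for all i = 1,…,n }. Then v(γ) ∈ W⁻, and v(γ) is the unique minimal element of W⁻ in the Bruhat order; that is, for every w ∈ W⁻ and all i,j ∈ {1,…,n} one has r_{v(γ)}(i,j) ≥ r_w(i,j). -/
open Finset Module

noncomputable section

namespace VAux
variable {n : ℕ}

lemma card_val_lt (j : ℕ) (hj : j ≤ n) :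
    (univ.filter fun m : Fin n => m.val < j).card = j := by
  have h : (univ.filter fun m : Fin n => m.val < j)
      = (Finset.range j).attachFin (fun m hm => lt_of_lt_of_le (Finset.mem_range.mp hm) hj) := by
    ext m; simp [Finset.mem_attachFin]
  rw [h, Finset.card_attachFin, Finset.card_range]

lemma card_val_Ico (a b : ℕ) (hb : b ≤ n) :
    (univ.filter fun m : Fin n => a ≤ m.val ∧ m.val < b).card = b - a := by
  have h : (univ.filter fun m : Fin n => a ≤ m.val ∧ m.val < b)
      = (Finset.Ico a b).attachFin (fun m hm => lt_of_lt_of_le (Finset.mem_Ico.mp hm).2 hb) := by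
    ext m; simp [Finset.mem_attachFin, Finset.mem_Ico, and_comm]
  rw [h, Finset.card_attachFin, Nat.card_Ico]

lemma card_filter_perm (v : Equiv.Perm (Fin n)) (P : Fin n → Prop) [DecidablePred P] :
    (univ.filter fun k => P (v k)).card = (univ.filter P).card := by
  apply Finset.card_bij (fun k _ => v k)
  · intro k hk; simpa using (Finset.mem_filter.mp hk).2
  · intro k1 _ k2 _ h; exact v.injective h
  · intro m hm; exact ⟨v.symm m, by simpa using (Finset.mem_filter.mp hm).2, by simp⟩

end VAux

/-- `v(γ)` lies in
`W⁻ = {w : r_{w₀w}(i,q) = γ(i;-) for all i}` and is its unique minimal element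
in the Bruhat order: every `w ∈ W⁻` satisfies `r_{v(γ)}(i,j) ≥ r_w(i,j)`. -/
theorem vPerm_min_of_Wminus {p q : ℕ} (hn : 1 ≤ p + q) (γ : Clan p q)
    (v : Equiv.Perm (Fin (p + q))) (hv : IsVPerm γ v) :
    (∀ i : ℕ, 1 ≤ i → i ≤ p + q →
        rankMatrix (Fin.revPerm * v) i q = γ.cminus i) ∧
    (∀ w : Equiv.Perm (Fin (p + q)),
      (∀ i : ℕ, 1 ≤ i → i ≤ p + q →
        rankMatrix (Fin.revPerm * w) i q = γ.cminus i) →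
      ∀ i j : ℕ, 1 ≤ i → i ≤ p + q → 1 ≤ j → j ≤ p + q →
        rankMatrix w i j ≤ rankMatrix v i j) := by
  -- abbreviations
  set T := γ.tplusSet with hT
  -- characterization of the complement of `tplusSet`
  have hnotT : ∀ k : Fin (p + q),
      (γ.symbol k = Sum.inr false ∨ ∃ j, γ.symbol k = Sum.inl j ∧ j < k) ↔ k ∉ T := by
    intro k
    simp only [hT, Clan.tplusSet, Finset.mem_filter, Finset.mem_univ, true_and, not_or,
      not_exists]
    rcases hsym : γ.symbol k with j | b
    · have hne : j.val ≠ k.val := fun h => γ.mate_ne k j hsym (Fin.ext h)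
      constructor
      · rintro (h | ⟨j', hj', hlt⟩)
        · exact absurd h (by simp)
        · obtain rfl := Sum.inl.inj hj'
          refine ⟨by simp, ?_⟩
          intro x
          rintro ⟨hx, hkx⟩
          obtain rfl := Sum.inl.inj hx
          have h1 := Fin.lt_def.mp hlt
          have h2 := Fin.lt_def.mp hkx
          omega
      · rintro ⟨-, h2⟩
        right
        refine ⟨j, rfl, ?_⟩
        rcases Nat.lt_or_ge j.val k.val with h | h
        · exact Fin.lt_def.mpr h
        · exact absurd ⟨rfl, Fin.lt_def.mpr (by omega)⟩ (h2 j)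
    · cases b <;> simp
  -- `cminus` counts positions outside `T`
  have hcminus : ∀ i : ℕ, γ.cminus i
      = (univ.filter fun k : Fin (p + q) => k.val < i ∧ k ∉ T).card := by
    intro i
    unfold Clan.cminus
    congr 1
    apply Finset.filter_congr
    intro k _
    rw [and_congr_right_iff]
    intro _
    exact hnotT k
  set A : ℕ → ℕ := fun i => (T.filter fun k => k.val < i).card with hAdef
  set B : ℕ → ℕ := fun i => (univ.filter fun k : Fin (p + q) => k.val < i ∧ k ∉ T).card
    with hBdef
  have hA : ∀ i : ℕ, A i = (univ.filter fun k : Fin (p + q) => k.val < i ∧ k ∈ T).card := by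
    intro i; simp only [hAdef]; congr 1; ext k
    simp only [Finset.mem_filter, Finset.mem_univ, true_and]; tauto
  have hsum : ∀ i : ℕ, i ≤ p + q → A i + B i = i := by
    intro i hi
    have h1 := Finset.card_filter_add_card_filter_not
      (s := univ.filter fun k : Fin (p + q) => k.val < i) (p := fun k => k ∈ T)
    rw [Finset.filter_filter, Finset.filter_filter, VAux.card_val_lt i hi] at h1
    rw [hA i]
    simp only [hBdef]
    exact h1
  -- `T` has exactly `p` elements
  have hTcard : T.card = p := by
    set Pls := univ.filter fun k : Fin (p + q) => γ.symbol k = Sum.inr true with hPls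
    set Mns := univ.filter fun k : Fin (p + q) => γ.symbol k = Sum.inr false with hMns
    set Opn := univ.filter fun k : Fin (p + q) => ∃ j, γ.symbol k = Sum.inl j ∧ k < j with hOpn
    set Cls := univ.filter fun k : Fin (p + q) => ∃ j, γ.symbol k = Sum.inl j ∧ j < k with hCls
    have hbal : Pls.card + q = Mns.card + p := γ.balance
    have hOC : Opn.card = Cls.card := by
      apply Finset.card_bij (fun k _ => (γ.symbol k).elim id (fun _ => k))
      · intro k hk
        simp only [hOpn, Finset.mem_filter, Finset.mem_univ, true_and] at hk
        obtain ⟨j, hj, hkj⟩ := hk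
        simp only [hCls, Finset.mem_filter, Finset.mem_univ, true_and, hj, Sum.elim_inl, id]
        exact ⟨k, γ.mate_invol k j hj, hkj⟩
      · intro k1 hk1 k2 hk2 heq
        simp only [hOpn, Finset.mem_filter, Finset.mem_univ, true_and] at hk1 hk2
        obtain ⟨j1, hj1, -⟩ := hk1
        obtain ⟨j2, hj2, -⟩ := hk2
        rw [hj1, hj2] at heq
        simp only [Sum.elim_inl, id] at heq
        subst heq
        have e1 := γ.mate_invol k1 j1 hj1
        have e2 := γ.mate_invol k2 j1 hj2
        exact Sum.inl.inj (e1.symm.trans e2)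
      · intro c hc
        simp only [hCls, Finset.mem_filter, Finset.mem_univ, true_and] at hc
        obtain ⟨s, hs, hsc⟩ := hc
        refine ⟨s, ?_, ?_⟩
        · simp only [hOpn, Finset.mem_filter, Finset.mem_univ, true_and]
          exact ⟨c, γ.mate_invol c s hs, hsc⟩
        · rw [γ.mate_invol c s hs]; rfl
    have hTU : T = Pls ∪ Opn := by
      ext k
      simp only [hT, Clan.tplusSet, hPls, hOpn, Finset.mem_filter, Finset.mem_union,
        Finset.mem_univ, true_and]
    have hdisjPO : Disjoint Pls Opn := by
      rw [Finset.disjoint_left]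
      intro k hk1 hk2
      simp only [hPls, hOpn, Finset.mem_filter, Finset.mem_univ, true_and] at hk1 hk2
      obtain ⟨j, hj, -⟩ := hk2
      rw [hk1] at hj
      exact absurd hj (by simp)
    have hPO : T.card = Pls.card + Opn.card := by
      rw [hTU, Finset.card_union_of_disjoint hdisjPO]
    have hMCU : Mns ∪ Cls = univ \ T := by
      ext k
      simp only [hMns, hCls, Finset.mem_union, Finset.mem_filter, Finset.mem_univ, true_and,
        Finset.mem_sdiff]
      exact (hnotT k).trans (by tauto)
    have hdisjMC : Disjoint Mns Cls := by
      rw [Finset.disjoint_left]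
      intro k hk1 hk2
      simp only [hMns, hCls, Finset.mem_filter, Finset.mem_univ, true_and] at hk1 hk2
      obtain ⟨j, hj, -⟩ := hk2
      rw [hk1] at hj
      exact absurd hj (by simp)
    have hsd : (univ \ T).card = (p + q) - T.card := by
      rw [Finset.card_sdiff_of_subset (Finset.subset_univ T), Finset.card_univ, Fintype.card_fin]
    have hle : T.card ≤ p + q := by
      calc T.card ≤ (univ : Finset (Fin (p + q))).card := Finset.card_le_univ T
        _ = p + q := by rw [Finset.card_univ, Fintype.card_fin]
    have hMC : Mns.card + Cls.card = (p + q) - T.card := by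
      rw [← Finset.card_union_of_disjoint hdisjMC, hMCU, hsd]
    omega
  have hcardcompl : (univ.filter fun k : Fin (p + q) => k ∉ T).card = q := by
    have h1 : (univ.filter fun k : Fin (p + q) => k ∉ T) = univ \ T := by
      ext k; simp [Finset.mem_sdiff]
    rw [h1, Finset.card_sdiff_of_subset (Finset.subset_univ T), Finset.card_univ, Fintype.card_fin,
      hTcard]
    omega
  have hAle : ∀ i : ℕ, A i ≤ p := by
    intro i
    calc A i ≤ T.card := Finset.card_le_card (Finset.filter_subset _ _)
      _ = p := hTcard
  have hBle : ∀ i : ℕ, B i ≤ q := by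
    intro i
    calc B i ≤ (univ.filter fun k : Fin (p + q) => k ∉ T).card :=
          Finset.card_le_card (by intro k hk; simp only [Finset.mem_filter] at *; tauto)
      _ = q := hcardcompl
  -- values of `v`
  have hvT : ∀ k ∈ T, (v k).val = A k.val := by
    intro k hk
    have heq : (γ.tplusSet.filter fun j => j < k) = T.filter fun j => j.val < k.val := by
      apply Finset.filter_congr
      intro j _
      exact Fin.lt_def
    rw [(hv k).1 hk, heq]
  have hvC : ∀ k ∉ T, (v k).val
      = p + (univ.filter fun j : Fin (p + q) => j.val < k.val ∧ j ∉ T).card := by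
    intro k hk
    have heq : (univ.filter fun j : Fin (p + q) => j ∉ γ.tplusSet ∧ j < k)
        = univ.filter fun j : Fin (p + q) => j.val < k.val ∧ j ∉ T := by
      apply Finset.filter_congr
      intro j _
      rw [Fin.lt_def, and_comm]
    rw [(hv k).2 hk, heq]
  have hvTlt : ∀ k ∈ T, (v k).val < p := by
    intro k hk
    rw [(hv k).1 hk, ← hT]
    calc #(T.filter fun j => j < k) < #T :=
        Finset.card_lt_card (Finset.filter_ssubset.mpr ⟨k, hk, by simp⟩)
      _ = p := hTcard
  have hvCge : ∀ k ∉ T, p ≤ (v k).val := by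
    intro k hk; rw [hvC k hk]; exact Nat.le_add_right _ _
  -- monotone counting equivalences
  have hmonoT : ∀ k ∈ T, ∀ i : ℕ, (k.val < i ↔ (v k).val < A i) := by
    intro k hk i
    simp only [hvT k hk, hAdef]
    constructor
    · intro h
      apply Finset.card_lt_card
      refine (Finset.ssubset_iff_of_subset ?_).mpr ⟨k, ?_, ?_⟩
      · intro j hj
        simp only [Finset.mem_filter] at *
        exact ⟨hj.1, by omega⟩
      · simp only [Finset.mem_filter]; exact ⟨hk, h⟩
      · simp
    · intro h
      by_contra hki
      push_neg at hki
      have hsub : (T.filter fun j => j.val < i) ⊆ T.filter fun j => j.val < k.val := by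
        intro j hj
        simp only [Finset.mem_filter] at *
        exact ⟨hj.1, by omega⟩
      have := Finset.card_le_card hsub
      omega
  have hmonoC : ∀ k ∉ T, ∀ i : ℕ, (k.val < i ↔ (v k).val < p + B i) := by
    intro k hk i
    simp only [hvC k hk, hBdef]
    rw [Nat.add_lt_add_iff_left]
    constructor
    · intro h
      apply Finset.card_lt_card
      refine (Finset.ssubset_iff_of_subset ?_).mpr ⟨k, ?_, ?_⟩
      · intro j hj
        simp only [Finset.mem_filter, Finset.mem_univ, true_and] at *
        exact ⟨by omega, hj.2⟩
      · simp only [Finset.mem_filter, Finset.mem_univ, true_and]; exact ⟨h, hk⟩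
      · simp
    · intro h
      by_contra hki
      push_neg at hki
      have hsub : (univ.filter fun j : Fin (p + q) => j.val < i ∧ j ∉ T)
          ⊆ univ.filter fun j : Fin (p + q) => j.val < k.val ∧ j ∉ T := by
        intro j hj
        simp only [Finset.mem_filter, Finset.mem_univ, true_and] at *
        exact ⟨by omega, hj.2⟩
      have := Finset.card_le_card hsub
      omega
  -- rank matrix of `w₀ w`
  have hrev : ∀ (w : Equiv.Perm (Fin (p + q))) (i : ℕ),
      rankMatrix (Fin.revPerm * w) i q
        = (univ.filter fun k : Fin (p + q) => k.val < i ∧ p ≤ (w k).val).card := by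
    intro w i
    unfold rankMatrix
    congr 1
    apply Finset.filter_congr
    intro k _
    rw [and_congr_right_iff]
    intro _
    rw [Equiv.Perm.mul_apply, Fin.revPerm_apply, Fin.val_rev]
    have h2 : (w k).val < p + q := (w k).isLt
    omega
  constructor
  · -- membership of v in W⁻
    intro i hi1 hi2
    rw [hrev v i, hcminus i]
    congr 1
    apply Finset.filter_congr
    intro k _
    rw [and_congr_right_iff]
    intro _
    constructor
    · intro hp hkT
      exact absurd hp (not_le.mpr (hvTlt k hkT))
    · exact hvCge k
  · -- minimality
    intro w hw i j hi1 hi2 hj1 hj2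
    have hwcond : (univ.filter fun k : Fin (p + q) => k.val < i ∧ p ≤ (w k).val).card
        = B i := by
      rw [← hrev w i, hw i hi1 hi2, hcminus i]
    have hwlow : (univ.filter fun k : Fin (p + q) => k.val < i ∧ (w k).val < p).card
        = A i := by
      have h1 := Finset.card_filter_add_card_filter_not
        (s := univ.filter fun k : Fin (p + q) => k.val < i) (p := fun k => (w k).val < p)
      rw [Finset.filter_filter, Finset.filter_filter, VAux.card_val_lt i hi2] at h1
      have h2 : (univ.filter fun k : Fin (p + q) => k.val < i ∧ ¬(w k).val < p)
          = univ.filter fun k : Fin (p + q) => k.val < i ∧ p ≤ (w k).val := by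
        apply Finset.filter_congr
        intro k _
        rw [not_lt]
      rw [h2, hwcond] at h1
      have h3 := hsum i hi2
      omega
    -- upper bound for w
    have hsplitW : rankMatrix w i j
        = (univ.filter fun k : Fin (p + q) =>
            (k.val < i ∧ (w k).val < j) ∧ (w k).val < p).card
        + (univ.filter fun k : Fin (p + q) =>
            (k.val < i ∧ (w k).val < j) ∧ p ≤ (w k).val).card := by
      have h1 := Finset.card_filter_add_card_filter_not
        (s := univ.filter fun k : Fin (p + q) => k.val < i ∧ (w k).val < j)
        (p := fun k => (w k).val < p)
      rw [Finset.filter_filter, Finset.filter_filter] at h1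
      have h2 : (univ.filter fun k : Fin (p + q) =>
            (k.val < i ∧ (w k).val < j) ∧ ¬(w k).val < p)
          = univ.filter fun k : Fin (p + q) =>
            (k.val < i ∧ (w k).val < j) ∧ p ≤ (w k).val := by
        apply Finset.filter_congr
        intro k _
        rw [not_lt]
      rw [h2] at h1
      unfold rankMatrix
      omega
    have hT1a : (univ.filter fun k : Fin (p + q) =>
        (k.val < i ∧ (w k).val < j) ∧ (w k).val < p).card ≤ A i := by
      rw [← hwlow]
      apply Finset.card_le_card
      intro k hk
      simp only [Finset.mem_filter] at *
      tauto
    have hT1b : (univ.filter fun k : Fin (p + q) =>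
        (k.val < i ∧ (w k).val < j) ∧ (w k).val < p).card ≤ j := by
      have h : (univ.filter fun k : Fin (p + q) =>
          (k.val < i ∧ (w k).val < j) ∧ (w k).val < p).card ≤ (Finset.range j).card := by
        apply Finset.card_le_card_of_injOn (fun k => (w k).val)
        · intro k hk
          simp only [Finset.coe_filter, Set.mem_setOf_eq] at hk
          exact Finset.mem_range.mpr hk.2.1.2
        · intro k1 _ k2 _ heq
          exact w.injective (Fin.ext heq)
      simpa using h
    have hT2a : (univ.filter fun k : Fin (p + q) =>
        (k.val < i ∧ (w k).val < j) ∧ p ≤ (w k).val).card ≤ B i := by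
      rw [← hwcond]
      apply Finset.card_le_card
      intro k hk
      simp only [Finset.mem_filter] at *
      tauto
    have hT2b : (univ.filter fun k : Fin (p + q) =>
        (k.val < i ∧ (w k).val < j) ∧ p ≤ (w k).val).card ≤ j - p := by
      have h : (univ.filter fun k : Fin (p + q) =>
          (k.val < i ∧ (w k).val < j) ∧ p ≤ (w k).val).card ≤ (Finset.range (j - p)).card := by
        apply Finset.card_le_card_of_injOn (fun k => (w k).val - p)
        · intro k hk
          simp only [Finset.coe_filter, Set.mem_setOf_eq] at hk
          exact Finset.mem_range.mpr (by simp only []; omega)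
        · intro k1 hk1 k2 hk2 heq
          simp only [Finset.coe_filter, Set.mem_setOf_eq] at hk1 hk2
          have e1 : p ≤ (w k1).val := hk1.2.2
          have e2 : p ≤ (w k2).val := hk2.2.2
          have heq' : (w k1).val - p = (w k2).val - p := heq
          exact w.injective (Fin.ext (by omega))
      simpa using h
    -- lower bound for v
    have hS1card : (univ.filter fun k : Fin (p + q) =>
        (v k).val < min (A i) j).card = min (A i) j := by
      rw [VAux.card_filter_perm v (fun m => m.val < min (A i) j)]
      exact VAux.card_val_lt _ (by have := hAle i; omega)
    have hS2card : (univ.filter fun k : Fin (p + q) =>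
        p ≤ (v k).val ∧ (v k).val < p + min (B i) (j - p)).card = min (B i) (j - p) := by
      rw [VAux.card_filter_perm v (fun m => p ≤ m.val ∧ m.val < p + min (B i) (j - p))]
      rw [VAux.card_val_Ico p (p + min (B i) (j - p)) (by have := hBle i; omega)]
      omega
    have hdisj : Disjoint
        (univ.filter fun k : Fin (p + q) => (v k).val < min (A i) j)
        (univ.filter fun k : Fin (p + q) =>
          p ≤ (v k).val ∧ (v k).val < p + min (B i) (j - p)) := by
      rw [Finset.disjoint_left]
      intro k hk1 hk2
      simp only [Finset.mem_filter] at hk1 hk2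
      have := hAle i
      omega
    have hsub : (univ.filter fun k : Fin (p + q) => (v k).val < min (A i) j)
        ∪ (univ.filter fun k : Fin (p + q) =>
          p ≤ (v k).val ∧ (v k).val < p + min (B i) (j - p))
        ⊆ univ.filter fun k : Fin (p + q) => k.val < i ∧ (v k).val < j := by
      apply Finset.union_subset
      · intro k hk
        simp only [Finset.mem_filter, Finset.mem_univ, true_and] at *
        have hvj : (v k).val < j := lt_of_lt_of_le hk (min_le_right _ _)
        refine ⟨?_, hvj⟩
        by_cases hkT : k ∈ T
        · exact (hmonoT k hkT i).mpr (lt_of_lt_of_le hk (min_le_left _ _))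
        · have := hvCge k hkT
          have := hAle i
          omega
      · intro k hk
        simp only [Finset.mem_filter, Finset.mem_univ, true_and] at *
        obtain ⟨hp, hlt⟩ := hk
        have hkT : k ∉ T := by
          intro hkT
          exact absurd hp (not_le.mpr (hvTlt k hkT))
        have hmin1 := min_le_left (B i) (j - p)
        have hmin2 := min_le_right (B i) (j - p)
        refine ⟨(hmonoC k hkT i).mpr (by omega), by omega⟩
    have hlow : min (A i) j + min (B i) (j - p) ≤ rankMatrix v i j := by
      rw [← hS1card, ← hS2card, ← Finset.card_union_of_disjoint hdisj]
      unfold rankMatrix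
      exact Finset.card_le_card hsub
    rw [hsplitW]
    have h1 : (univ.filter fun k : Fin (p + q) =>
        (k.val < i ∧ (w k).val < j) ∧ (w k).val < p).card ≤ min (A i) j :=
      le_min hT1a hT1b
    have h2 : (univ.filter fun k : Fin (p + q) =>
        (k.val < i ∧ (w k).val < j) ∧ p ≤ (w k).val).card ≤ min (B i) (j - p) :=
      le_min hT2a hT2b
    omega
end
end

section
/- Let n = p+q, let a ∈ S_n be a shuffle of (p,p−1,…,1) and (n,n−1,…,p+1) (i.e. the subsequence of values of a(1),…,a(n) that are ≤ p is p,p−1,…,1 and the subsequence of values > p is n,n−1,…,p+1), and let b ∈ S_n be a shuffle of (1,…,p) and (p+1,…,n) (i.e. the subsequence of values of b(1),…,b(n) that are ≤ p is 1,2,…,p and the subsequence of values > p is p+1,…,n). Then a ≥ b in the Bruhat order if and only if for every i ∈ {1,…,n}, #{ j ≤ i : a(j) > p and b(j) ≤ p } ≥ #{ j ≤ i : a(j) ≤ p and b(j) > p }. -/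
open Finset Module

noncomputable section

section ShuffleHelpers

variable {n : ℕ}

private lemma card_split (P Q : Fin n → Prop) [DecidablePred P] [DecidablePred Q] :
    (univ.filter fun k => P k ∧ Q k).card + (univ.filter fun k => P k ∧ ¬ Q k).card
      = (univ.filter P).card := by
  classical
  rw [← Finset.filter_filter, ← Finset.filter_filter]
  exact Finset.card_filter_add_card_filter_not _

/-- Injectivity bound: at most `d - c` positions can carry values in `[c,d)`. -/
private lemma card_le_Ico (w : Equiv.Perm (Fin n)) (i c d : ℕ) :
    (univ.filter fun k : Fin n => k.val < i ∧ c ≤ (w k).val ∧ (w k).val < d).card ≤ d - c := by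
  classical
  have hinj : Set.InjOn (fun k : Fin n => (w k).val)
      ↑(univ.filter fun k : Fin n => k.val < i ∧ c ≤ (w k).val ∧ (w k).val < d) := by
    intro x _ y _ hxy
    exact w.injective (Fin.val_injective hxy)
  calc (univ.filter fun k : Fin n => k.val < i ∧ c ≤ (w k).val ∧ (w k).val < d).card
      = ((univ.filter fun k : Fin n => k.val < i ∧ c ≤ (w k).val ∧ (w k).val < d).image
          fun k => (w k).val).card := (Finset.card_image_of_injOn hinj).symm
    _ ≤ (Finset.Ico c d).card := by
        apply Finset.card_le_card
        intro x hx
        simp only [Finset.mem_image, Finset.mem_filter] at hx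
        obtain ⟨k, ⟨_, _, h1, h2⟩, rfl⟩ := hx
        exact Finset.mem_Ico.mpr ⟨h1, h2⟩
    _ = d - c := Nat.card_Ico c d

/-- Completeness for an increasing class `[c, n)`: if some position before `i`
carries a value `≥ d`, then all values in `[c, d)` occur before `i`. -/
private lemma complete_lt (w : Equiv.Perm (Fin n)) (i c d : ℕ)
    (hord : ∀ k k' : Fin n, c ≤ (w k).val → c ≤ (w k').val →
      (w k).val < (w k').val → k < k')
    (k0 : Fin n) (hk0i : k0.val < i) (hk0 : d ≤ (w k0).val) (hcd : c ≤ d) :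
    d - c ≤ (univ.filter fun k : Fin n => k.val < i ∧ c ≤ (w k).val ∧ (w k).val < d).card := by
  classical
  have hsub : Finset.Ico c d ⊆
      (univ.filter fun k : Fin n => k.val < i ∧ c ≤ (w k).val ∧ (w k).val < d).image
        fun k => (w k).val := by
    intro v hv
    rw [Finset.mem_Ico] at hv
    have hvn : v < n := lt_of_lt_of_le hv.2 (le_trans hk0 (Nat.le_of_lt (w k0).isLt))
    refine Finset.mem_image.mpr ⟨w.symm ⟨v, hvn⟩, ?_, ?_⟩
    · have hw : w (w.symm ⟨v, hvn⟩) = ⟨v, hvn⟩ := w.apply_symm_apply _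
      have hlt : (w.symm ⟨v, hvn⟩) < k0 := by
        apply hord
        · rw [hw]; exact hv.1
        · exact le_trans hcd hk0
        · rw [hw]; exact lt_of_lt_of_le hv.2 hk0
      simp only [Finset.mem_filter, Finset.mem_univ, true_and, hw]
      exact ⟨lt_trans (by exact_mod_cast hlt) hk0i, hv.1, hv.2⟩
    · rw [w.apply_symm_apply]
  calc d - c = (Finset.Ico c d).card := (Nat.card_Ico c d).symm
    _ ≤ _ := Finset.card_le_card hsub
    _ ≤ _ := Finset.card_image_le

/-- Completeness for a decreasing class `[0, d)`: if some position before `i`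
carries a value `< c`, then all values in `[c, d)` occur before `i`. -/
private lemma complete_gt (w : Equiv.Perm (Fin n)) (i c d : ℕ)
    (hord : ∀ k k' : Fin n, (w k).val < d → (w k').val < d →
      (w k).val < (w k').val → k' < k)
    (k0 : Fin n) (hk0i : k0.val < i) (hk0 : (w k0).val < c) (hdn : d ≤ n) :
    d - c ≤ (univ.filter fun k : Fin n => k.val < i ∧ c ≤ (w k).val ∧ (w k).val < d).card := by
  classical
  have hsub : Finset.Ico c d ⊆
      (univ.filter fun k : Fin n => k.val < i ∧ c ≤ (w k).val ∧ (w k).val < d).image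
        fun k => (w k).val := by
    intro v hv
    rw [Finset.mem_Ico] at hv
    have hvn : v < n := lt_of_lt_of_le hv.2 hdn
    refine Finset.mem_image.mpr ⟨w.symm ⟨v, hvn⟩, ?_, ?_⟩
    · have hw : w (w.symm ⟨v, hvn⟩) = ⟨v, hvn⟩ := w.apply_symm_apply _
      have hlt : (w.symm ⟨v, hvn⟩) < k0 := by
        apply hord k0
        · exact lt_of_lt_of_le hk0 (le_trans hv.1 hv.2.le)
        · rw [hw]; exact hv.2
        · rw [hw]; exact lt_of_lt_of_le hk0 hv.1
      simp only [Finset.mem_filter, Finset.mem_univ, true_and, hw]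
      exact ⟨lt_trans (by exact_mod_cast hlt) hk0i, hv.1, hv.2⟩
    · rw [w.apply_symm_apply]
  calc d - c = (Finset.Ico c d).card := (Nat.card_Ico c d).symm
    _ ≤ _ := Finset.card_le_card hsub
    _ ≤ _ := Finset.card_image_le

private lemma card_split_iff {n : ℕ} (P Q R S : Fin n → Prop)
    [DecidablePred P] [DecidablePred Q] [DecidablePred R] [DecidablePred S]
    (hR : ∀ k, R k ↔ P k ∧ Q k) (hS : ∀ k, S k ↔ P k ∧ ¬ Q k) :
    (univ.filter R).card + (univ.filter S).card = (univ.filter P).card := by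
  classical
  have h1 : univ.filter R = univ.filter fun k => P k ∧ Q k := by
    ext k; simp only [Finset.mem_filter, Finset.mem_univ, true_and]; exact hR k
  have h2 : univ.filter S = univ.filter fun k => P k ∧ ¬ Q k := by
    ext k; simp only [Finset.mem_filter, Finset.mem_univ, true_and]; exact hS k
  rw [h1, h2]
  exact card_split P Q

end ShuffleHelpers

/-- Let `a` be a shuffle of `(p,…,1)` and `(n,…,p+1)` and let
`b` be a shuffle of `(1,…,p)` and `(p+1,…,n)` (values are `0`-based, so
"value `≤ p`" reads `val < p`).  Then `a ≥ b` in the Bruhat order (i.e.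
`r_a(i,j) ≤ r_b(i,j)` for all `i,j`) iff for every `i`, the number of
positions `k ≤ i` with `a(k) > p` and `b(k) ≤ p` is at least the number of
positions `k ≤ i` with `a(k) ≤ p` and `b(k) > p`. -/
theorem shuffle_bruhat_iff_HL {p q : ℕ} (a b : Equiv.Perm (Fin (p + q)))
    (ha : ∀ i j : Fin (p + q), i < j →
      ((a i).val < p → (a j).val < p → (a j).val < (a i).val) ∧
      (p ≤ (a i).val → p ≤ (a j).val → (a j).val < (a i).val))
    (hb : ∀ i j : Fin (p + q), i < j →
      ((b i).val < p → (b j).val < p → (b i).val < (b j).val) ∧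
      (p ≤ (b i).val → p ≤ (b j).val → (b i).val < (b j).val)) :
    (∀ i j : ℕ, 1 ≤ i → i ≤ p + q → 1 ≤ j → j ≤ p + q →
        rankMatrix a i j ≤ rankMatrix b i j)
      ↔ ∀ i : ℕ, 1 ≤ i → i ≤ p + q →
          (univ.filter fun k : Fin (p + q) =>
            k.val < i ∧ (a k).val < p ∧ p ≤ (b k).val).card
            ≤ (univ.filter fun k : Fin (p + q) =>
                k.val < i ∧ p ≤ (a k).val ∧ (b k).val < p).card := by
  classical
  have hordA : ∀ k k' : Fin (p + q), (a k).val < p → (a k').val < p →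
      (a k).val < (a k').val → k' < k := by
    intro k k' h1 h2 h3
    rcases lt_trichotomy k k' with h | h | h
    · exact absurd ((ha k k' h).1 h1 h2) (by omega)
    · subst h; exact absurd h3 (lt_irrefl _)
    · exact h
  have hordB : ∀ k k' : Fin (p + q), p ≤ (b k).val → p ≤ (b k').val →
      (b k).val < (b k').val → k < k' := by
    intro k k' h1 h2 h3
    rcases lt_trichotomy k k' with h | h | h
    · exact h
    · subst h; exact absurd h3 (lt_irrefl _)
    · exact absurd ((hb k' k h).2 h2 h1) (by omega)
  have key : ∀ i : ℕ,
      ((univ.filter fun k : Fin (p + q) => k.val < i ∧ (a k).val < p).card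
        ≤ (univ.filter fun k : Fin (p + q) => k.val < i ∧ (b k).val < p).card
      ↔ (univ.filter fun k : Fin (p + q) =>
            k.val < i ∧ (a k).val < p ∧ p ≤ (b k).val).card
          ≤ (univ.filter fun k : Fin (p + q) =>
              k.val < i ∧ p ≤ (a k).val ∧ (b k).val < p).card) := by
    intro i
    have EA := card_split_iff (fun k : Fin (p + q) => k.val < i ∧ (a k).val < p)
      (fun k => (b k).val < p)
      (fun k => k.val < i ∧ (a k).val < p ∧ (b k).val < p)
      (fun k => k.val < i ∧ (a k).val < p ∧ p ≤ (b k).val)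
      (fun k => by omega) (fun k => by omega)
    have EB := card_split_iff (fun k : Fin (p + q) => k.val < i ∧ (b k).val < p)
      (fun k => (a k).val < p)
      (fun k => k.val < i ∧ (a k).val < p ∧ (b k).val < p)
      (fun k => k.val < i ∧ p ≤ (a k).val ∧ (b k).val < p)
      (fun k => by omega) (fun k => by omega)
    omega
  constructor
  · intro H i h1 hi
    rcases Nat.eq_zero_or_pos p with hp | hp
    · have hemp : (univ.filter fun k : Fin (p + q) =>
          k.val < i ∧ (a k).val < p ∧ p ≤ (b k).val) = ∅ := by
        ext k
        simp only [Finset.mem_filter, Finset.mem_univ, true_and, Finset.notMem_empty,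
          iff_false]
        omega
      rw [hemp, Finset.card_empty]
      exact Nat.zero_le _
    · exact (key i).mp (by simpa [rankMatrix] using H i p h1 hi hp (Nat.le_add_right p q))
  · intro H i j h1 hi hj1 hjn
    have hAB := (key i).mpr (H i h1 hi)
    simp only [rankMatrix]
    by_cases hj : j ≤ p
    · by_cases hne : (univ.filter fun k : Fin (p + q) =>
          k.val < i ∧ (a k).val < j).Nonempty
      · obtain ⟨k0, hk0⟩ := hne
        rw [Finset.mem_filter] at hk0
        have hMa := complete_gt a i j p hordA k0 hk0.2.1 hk0.2.2 (Nat.le_add_right p q)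
        have hMb := card_le_Ico b i j p
        have ESa := card_split_iff (fun k : Fin (p + q) => k.val < i ∧ (a k).val < p)
          (fun k => (a k).val < j)
          (fun k => k.val < i ∧ (a k).val < j)
          (fun k => k.val < i ∧ j ≤ (a k).val ∧ (a k).val < p)
          (fun k => by omega) (fun k => by omega)
        have ESb := card_split_iff (fun k : Fin (p + q) => k.val < i ∧ (b k).val < p)
          (fun k => (b k).val < j)
          (fun k => k.val < i ∧ (b k).val < j)
          (fun k => k.val < i ∧ j ≤ (b k).val ∧ (b k).val < p)
          (fun k => by omega) (fun k => by omega)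
        omega
      · have h0 : (univ.filter fun k : Fin (p + q) =>
            k.val < i ∧ (a k).val < j).card = 0 :=
          Finset.card_eq_zero.mpr (Finset.not_nonempty_iff_eq_empty.mp hne)
        omega
    · push_neg at hj
      by_cases hne : (univ.filter fun k : Fin (p + q) =>
          k.val < i ∧ j ≤ (b k).val).Nonempty
      · obtain ⟨k0, hk0⟩ := hne
        rw [Finset.mem_filter] at hk0
        have hLb := complete_lt b i p j hordB k0 hk0.2.1 hk0.2.2 hj.le
        have hLa := card_le_Ico a i p j
        have ELa := card_split_iff (fun k : Fin (p + q) => k.val < i ∧ (a k).val < j)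
          (fun k => (a k).val < p)
          (fun k => k.val < i ∧ (a k).val < p)
          (fun k => k.val < i ∧ p ≤ (a k).val ∧ (a k).val < j)
          (fun k => by omega) (fun k => by omega)
        have ELb := card_split_iff (fun k : Fin (p + q) => k.val < i ∧ (b k).val < j)
          (fun k => (b k).val < p)
          (fun k => k.val < i ∧ (b k).val < p)
          (fun k => k.val < i ∧ p ≤ (b k).val ∧ (b k).val < j)
          (fun k => by omega) (fun k => by omega)
        omega
      · have hall : ∀ k : Fin (p + q), k.val < i → (b k).val < j := by
          intro k hk
          by_contra hcon
          exact hne ⟨k, Finset.mem_filter.mpr ⟨Finset.mem_univ _, hk, not_lt.mp hcon⟩⟩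
        apply Finset.card_le_card
        intro k hk
        rw [Finset.mem_filter] at hk ⊢
        exact ⟨hk.1, hk.2.1, hall k hk.2.1⟩
end
end

section
/- Let n = p+q and let (u,v) be a (p,q)-pair of permutations in S_n such that w₀u ≥ v in the Bruhat order, where w₀ is the longest element of S_n (w₀(i) = n+1−i) and w₀u denotes the composition w₀ ∘ u. Then there exists a unique (p,q)-clan γ avoiding the pattern (1,2,1,2) such that u(γ) = w₀u and v(γ) = v. -/
open Finset Module

noncomputable section

namespace ClanAux

variable {n : ℕ}

/-- number of elements of `S` with value `< i`. -/
def cnt (S : Finset (Fin n)) (i : ℕ) : ℕ := (S.filter fun k : Fin n => (k : ℕ) < i).card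

lemma cnt_diff (S : Finset (Fin n)) {i j : ℕ} (h : i ≤ j) :
    cnt S j = cnt S i + (S.filter fun k : Fin n => i ≤ (k : ℕ) ∧ (k : ℕ) < j).card := by
  unfold cnt
  rw [← card_union_of_disjoint]
  · congr 1
    ext k
    simp only [mem_union, mem_filter]
    by_cases hk : k ∈ S <;> simp only [hk, true_and, false_and, false_or] <;> omega
  · rw [disjoint_left]
    intro a ha hb
    simp only [mem_filter] at ha hb
    omega

lemma cnt_succ (S : Finset (Fin n)) (i : Fin n) :
    cnt S ((i : ℕ) + 1) = cnt S i + (if i ∈ S then 1 else 0) := by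
  rw [cnt_diff S (Nat.le_succ i)]
  congr 1
  have h : (S.filter fun k : Fin n => (i : ℕ) ≤ (k : ℕ) ∧ (k : ℕ) < (i : ℕ) + 1)
      = if i ∈ S then {i} else ∅ := by
    split_ifs with h
    · ext k
      simp only [mem_filter, mem_singleton]
      constructor
      · rintro ⟨-, h1, h2⟩; exact Fin.ext (by omega)
      · rintro rfl; exact ⟨h, le_refl _, by omega⟩
    · ext k
      simp only [mem_filter, notMem_empty, iff_false]
      rintro ⟨hk, h1, h2⟩
      have : k = i := Fin.ext (by omega)
      exact h (this ▸ hk)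
  rw [h]
  split_ifs <;> simp

lemma cnt_of_ge (S : Finset (Fin n)) {i : ℕ} (h : n ≤ i) : cnt S i = S.card := by
  unfold cnt
  congr 1
  apply filter_true_of_mem
  intro k _
  exact lt_of_lt_of_le k.isLt h

/-- height function. -/
def hgt (A B : Finset (Fin n)) (i : ℕ) : ℤ := (cnt B i : ℤ) - (cnt A i : ℤ)

variable (A B : Finset (Fin n))

lemma hgt_succ (i : Fin n) :
    hgt A B ((i : ℕ) + 1) = hgt A B i + (if i ∈ B then 1 else 0) - (if i ∈ A then 1 else 0) := by
  unfold hgt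
  rw [cnt_succ, cnt_succ]
  split_ifs <;> push_cast <;> ring

lemma hgt_nonneg (hpref : ∀ i, cnt A i ≤ cnt B i) (i : ℕ) : 0 ≤ hgt A B i := by
  unfold hgt; have := hpref i; omega

lemma hgt_top (hAB : A.card = B.card) : hgt A B n = 0 := by
  unfold hgt
  rw [cnt_of_ge _ le_rfl, cnt_of_ge _ le_rfl, hAB]
  ring

/-- candidate mates of an opener `s`. -/
def mateT (s : Fin n) : Finset (Fin n) :=
  univ.filter fun k => s < k ∧ hgt A B ((k : ℕ) + 1) < hgt A B ((s : ℕ) + 1)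

variable {A B}

lemma hgt_succ_opener {s : Fin n} (hs : s ∈ B \ A) :
    hgt A B ((s : ℕ) + 1) = hgt A B s + 1 := by
  rw [hgt_succ]
  simp only [mem_sdiff] at hs
  rw [if_pos hs.1, if_neg hs.2]; ring

lemma mateT_nonempty (hAB : A.card = B.card) (hpref : ∀ i, cnt A i ≤ cnt B i)
    {s : Fin n} (hs : s ∈ B \ A) : (mateT A B s).Nonempty := by
  have hn : 1 ≤ n := s.pos
  have hlast : hgt A B n = 0 := hgt_top A B hAB
  have hs1 : 1 ≤ hgt A B ((s : ℕ) + 1) := by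
    rw [hgt_succ_opener hs]
    have := hgt_nonneg A B hpref s
    omega
  have hsn : (s : ℕ) < n - 1 := by
    rcases lt_or_ge (s : ℕ) (n - 1) with h | h
    · exact h
    · exfalso
      have hv : (s : ℕ) + 1 = n := by have := s.isLt; omega
      rw [hv] at hs1; omega
  refine ⟨⟨n - 1, by omega⟩, ?_⟩
  simp only [mateT, mem_filter, mem_univ, true_and]
  refine ⟨Fin.lt_def.mpr (by simpa using hsn), ?_⟩
  have hv : ((⟨n - 1, by omega⟩ : Fin n) : ℕ) + 1 = n := by simp; omega
  rw [hv, hlast]; omega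

/-- the mate of an opener. -/
def mate (A B : Finset (Fin n)) (s : Fin n) : Fin n :=
  if h : (mateT A B s).Nonempty then (mateT A B s).min' h else s

variable (hAB : A.card = B.card) (hpref : ∀ i, cnt A i ≤ cnt B i)
include hAB hpref

lemma mate_mem {s : Fin n} (hs : s ∈ B \ A) : mate A B s ∈ mateT A B s := by
  rw [mate, dif_pos (mateT_nonempty hAB hpref hs)]
  exact min'_mem _ _

lemma mate_gt {s : Fin n} (hs : s ∈ B \ A) : s < mate A B s := by
  have := mate_mem hAB hpref hs
  simp only [mateT, mem_filter] at this
  exact this.2.1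

lemma mate_hgt_lt {s : Fin n} (hs : s ∈ B \ A) :
    hgt A B ((mate A B s : ℕ) + 1) < hgt A B ((s : ℕ) + 1) := by
  have := mate_mem hAB hpref hs
  simp only [mateT, mem_filter] at this
  exact this.2.2

lemma mate_le {s t : Fin n} (hs : s ∈ B \ A) (ht : t ∈ mateT A B s) : mate A B s ≤ t := by
  rw [mate, dif_pos (mateT_nonempty hAB hpref hs)]
  exact min'_le _ _ ht

lemma mate_min {s : Fin n} (hs : s ∈ B \ A) :
    ∀ m : ℕ, (s : ℕ) ≤ m → m < (mate A B s : ℕ) →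
      hgt A B ((s : ℕ) + 1) ≤ hgt A B (m + 1) := by
  intro m h1 h2
  rcases eq_or_lt_of_le h1 with h | h
  · rw [← h]
  · have hm : m < n := lt_trans h2 (mate A B s).isLt
    by_contra hcon
    push_neg at hcon
    have hmem : (⟨m, hm⟩ : Fin n) ∈ mateT A B s := by
      simp only [mateT, mem_filter, mem_univ, true_and]
      exact ⟨Fin.lt_def.mpr h, hcon⟩
    have := mate_le hAB hpref hs hmem
    rw [Fin.le_def] at this
    simp only at this
    omega

lemma mate_closer {s : Fin n} (hs : s ∈ B \ A) :
    mate A B s ∈ A \ B ∧ hgt A B ((mate A B s : ℕ) + 1) = hgt A B ((s : ℕ) + 1) - 1 := by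
  have htval : (s : ℕ) < (mate A B s : ℕ) := Fin.lt_def.mp (mate_gt hAB hpref hs)
  have hprev : hgt A B ((s : ℕ) + 1) ≤ hgt A B ((mate A B s : ℕ)) := by
    have key := mate_min hAB hpref hs ((mate A B s : ℕ) - 1) (by omega) (by omega)
    have e : (mate A B s : ℕ) - 1 + 1 = (mate A B s : ℕ) := by omega
    rwa [e] at key
  have hlt : hgt A B ((mate A B s : ℕ) + 1) < hgt A B ((s : ℕ) + 1) :=
    mate_hgt_lt hAB hpref hs
  have hsucc := hgt_succ A B (mate A B s)
  have htA : mate A B s ∈ A ∧ mate A B s ∉ B := by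
    by_cases h1 : mate A B s ∈ A
    · by_cases h2 : mate A B s ∈ B
      · exfalso; rw [if_pos h2, if_pos h1] at hsucc; omega
      · exact ⟨h1, h2⟩
    · exfalso
      by_cases h2 : mate A B s ∈ B
      · rw [if_pos h2, if_neg h1] at hsucc; omega
      · rw [if_neg h2, if_neg h1] at hsucc; omega
  refine ⟨mem_sdiff.mpr htA, ?_⟩
  rw [if_neg htA.2, if_pos htA.1] at hsucc
  omega

lemma mate_inj {s s' : Fin n} (hs : s ∈ B \ A) (hs' : s' ∈ B \ A)
    (h : mate A B s = mate A B s') : s = s' := by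
  have core : ∀ a b : Fin n, a ∈ B \ A → b ∈ B \ A → a < b →
      mate A B a = mate A B b → False := by
    intro a b ha hb hab hmeq
    have hbt : b < mate A B a := hmeq ▸ mate_gt hAB hpref hb
    have havb : (a : ℕ) < (b : ℕ) := Fin.lt_def.mp hab
    have hbvt : (b : ℕ) < (mate A B a : ℕ) := Fin.lt_def.mp hbt
    have h1 : hgt A B ((a : ℕ) + 1) ≤ hgt A B (b : ℕ) := by
      have key := mate_min hAB hpref ha ((b : ℕ) - 1) (by omega) (by omega)
      have e : (b : ℕ) - 1 + 1 = (b : ℕ) := by omega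
      rwa [e] at key
    have h2 : hgt A B ((b : ℕ) + 1) = hgt A B (b : ℕ) + 1 := hgt_succ_opener hb
    have h3 := (mate_closer hAB hpref ha).2
    have h4 := (mate_closer hAB hpref hb).2
    rw [← hmeq] at h4
    omega
  rcases lt_trichotomy s s' with hlt | heq | hlt
  · exact absurd h (fun h => core s s' hs hs' hlt h)
  · exact heq
  · exact absurd h.symm (fun h => core s' s hs' hs hlt h)


/-- the opener matched to a closer. -/
def comate (A B : Finset (Fin n)) (t : Fin n) : Fin n :=
  if h : ((B \ A).filter fun s => mate A B s = t).Nonempty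
  then ((B \ A).filter fun s => mate A B s = t).min' h else t

omit hpref in
lemma card_sdiff_eq : (B \ A).card = (A \ B).card := by
  have h1 := card_sdiff_add_card_inter A B
  have h2 := card_sdiff_add_card_inter B A
  rw [inter_comm] at h2
  omega

lemma comate_spec {t : Fin n} (ht : t ∈ A \ B) :
    comate A B t ∈ B \ A ∧ mate A B (comate A B t) = t := by
  have himg : (B \ A).image (mate A B) = A \ B := by
    apply eq_of_subset_of_card_le
    · intro x hx
      simp only [mem_image] at hx
      obtain ⟨s, hs, rfl⟩ := hx
      exact (mate_closer hAB hpref hs).1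
    · rw [card_image_of_injOn
        (fun a ha b hb hab => mate_inj hAB hpref (mem_coe.mp ha) (mem_coe.mp hb) hab)]
      exact le_of_eq (card_sdiff_eq hAB.symm)
  rw [← himg, mem_image] at ht
  obtain ⟨s, hs, hst⟩ := ht
  have hne : ((B \ A).filter fun s => mate A B s = t).Nonempty :=
    ⟨s, mem_filter.mpr ⟨hs, hst⟩⟩
  rw [comate, dif_pos hne]
  have h := min'_mem _ hne
  rw [mem_filter] at h
  exact h

/-- the symbol function of the noncrossing clan determined by `A`, `B`. -/
def clanSymbol (A B : Finset (Fin n)) (i : Fin n) : (Fin n) ⊕ Bool :=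
  if i ∈ A then (if i ∈ B then Sum.inr true else Sum.inl (comate A B i))
  else (if i ∈ B then Sum.inl (mate A B i) else Sum.inr false)

omit hAB hpref in
lemma clanSymbol_pp {i : Fin n} (h1 : i ∈ A) (h2 : i ∈ B) :
    clanSymbol A B i = Sum.inr true := by rw [clanSymbol, if_pos h1, if_pos h2]

omit hAB hpref in
lemma clanSymbol_cl {i : Fin n} (hi : i ∈ A \ B) :
    clanSymbol A B i = Sum.inl (comate A B i) := by
  rw [mem_sdiff] at hi; rw [clanSymbol, if_pos hi.1, if_neg hi.2]

omit hAB hpref in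
lemma clanSymbol_op {i : Fin n} (hi : i ∈ B \ A) :
    clanSymbol A B i = Sum.inl (mate A B i) := by
  rw [mem_sdiff] at hi; rw [clanSymbol, if_neg hi.2, if_pos hi.1]

omit hAB hpref in
lemma clanSymbol_mm {i : Fin n} (h1 : i ∉ A) (h2 : i ∉ B) :
    clanSymbol A B i = Sum.inr false := by rw [clanSymbol, if_neg h1, if_neg h2]

lemma clanSymbol_inl_lt {i j : Fin n} (h : clanSymbol A B i = Sum.inl j) (hij : i < j) :
    i ∈ B \ A ∧ j = mate A B i := by
  by_cases h1 : i ∈ A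
  · by_cases h2 : i ∈ B
    · rw [clanSymbol_pp h1 h2] at h; exact absurd h (by simp)
    · exfalso
      have hi : i ∈ A \ B := mem_sdiff.mpr ⟨h1, h2⟩
      rw [clanSymbol_cl hi] at h
      have hj : j = comate A B i := by injection h with h; exact h.symm
      obtain ⟨hc1, hc2⟩ := comate_spec hAB hpref hi
      have := mate_gt hAB hpref hc1
      rw [hc2, ← hj] at this
      exact absurd hij (not_lt.mpr (le_of_lt this))
  · by_cases h2 : i ∈ B
    · have hi : i ∈ B \ A := mem_sdiff.mpr ⟨h2, h1⟩
      rw [clanSymbol_op hi] at h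
      injection h with h
      exact ⟨hi, h.symm⟩
    · rw [clanSymbol_mm h1 h2] at h; exact absurd h (by simp)

lemma clanSymbol_inl_gt {i j : Fin n} (h : clanSymbol A B i = Sum.inl j) (hij : j < i) :
    i ∈ A \ B ∧ j = comate A B i ∧ j ∈ B \ A ∧ mate A B j = i := by
  by_cases h1 : i ∈ A
  · by_cases h2 : i ∈ B
    · rw [clanSymbol_pp h1 h2] at h; exact absurd h (by simp)
    · have hi : i ∈ A \ B := mem_sdiff.mpr ⟨h1, h2⟩
      rw [clanSymbol_cl hi] at h
      injection h with h
      obtain ⟨hc1, hc2⟩ := comate_spec hAB hpref hi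
      exact ⟨hi, h.symm, h ▸ hc1, h ▸ hc2⟩
  · by_cases h2 : i ∈ B
    · exfalso
      have hi : i ∈ B \ A := mem_sdiff.mpr ⟨h2, h1⟩
      rw [clanSymbol_op hi] at h
      injection h with h
      have := mate_gt hAB hpref hi
      rw [h] at this
      exact absurd hij (not_lt.mpr (le_of_lt this))
    · rw [clanSymbol_mm h1 h2] at h; exact absurd h (by simp)

end ClanAux



section Build

open ClanAux

variable {p q : ℕ} (A B : Finset (Fin (p + q)))
  (hAB : A.card = B.card) (hpref : ∀ i, ClanAux.cnt A i ≤ ClanAux.cnt B i)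
  (hA : A.card = p)

/-- the noncrossing clan determined by the sets `A` (of `+`'s and closers)
and `B` (of `+`'s and openers). -/
def buildClan : Clan p q where
  symbol := clanSymbol A B
  mate_ne := by
    intro i j h
    by_cases h1 : i ∈ A <;> by_cases h2 : i ∈ B
    · rw [clanSymbol_pp h1 h2] at h; exact absurd h (by simp)
    · have hi : i ∈ A \ B := mem_sdiff.mpr ⟨h1, h2⟩
      rw [clanSymbol_cl hi] at h
      injection h with h
      obtain ⟨hc1, -⟩ := comate_spec hAB hpref hi
      rw [h] at hc1
      intro hji
      rw [hji] at hc1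
      rw [mem_sdiff] at hc1
      exact hc1.2 h1
    · have hi : i ∈ B \ A := mem_sdiff.mpr ⟨h2, h1⟩
      rw [clanSymbol_op hi] at h
      injection h with h
      rw [← h]
      exact Fin.ne_of_gt (mate_gt hAB hpref hi)
    · rw [clanSymbol_mm h1 h2] at h; exact absurd h (by simp)
  mate_invol := by
    intro i j h
    by_cases h1 : i ∈ A <;> by_cases h2 : i ∈ B
    · rw [clanSymbol_pp h1 h2] at h; exact absurd h (by simp)
    · have hi : i ∈ A \ B := mem_sdiff.mpr ⟨h1, h2⟩
      rw [clanSymbol_cl hi] at h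
      injection h with h
      obtain ⟨hc1, hc2⟩ := comate_spec hAB hpref hi
      rw [h] at hc1 hc2
      rw [clanSymbol_op hc1, hc2]
    · have hi : i ∈ B \ A := mem_sdiff.mpr ⟨h2, h1⟩
      rw [clanSymbol_op hi] at h
      injection h with h
      have hcl : j ∈ A \ B := h ▸ (mate_closer hAB hpref hi).1
      rw [clanSymbol_cl hcl]
      obtain ⟨hc1, hc2⟩ := comate_spec hAB hpref hcl
      have : comate A B j = i := by
        apply mate_inj hAB hpref hc1 hi
        rw [hc2, h]
      rw [this]
    · rw [clanSymbol_mm h1 h2] at h; exact absurd h (by simp)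
  balance := by
    have htrue : (univ.filter fun i => clanSymbol A B i = Sum.inr true) = A ∩ B := by
      ext i
      simp only [mem_filter, mem_univ, true_and, mem_inter]
      by_cases h1 : i ∈ A <;> by_cases h2 : i ∈ B
      · simp [clanSymbol_pp h1 h2, h1, h2]
      · simp [clanSymbol_cl (mem_sdiff.mpr ⟨h1, h2⟩), h2]
      · simp [clanSymbol_op (mem_sdiff.mpr ⟨h2, h1⟩), h1]
      · simp [clanSymbol_mm h1 h2, h1]
    have hfalse : (univ.filter fun i => clanSymbol A B i = Sum.inr false) = (A ∪ B)ᶜ := by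
      ext i
      simp only [mem_filter, mem_univ, true_and, mem_compl, mem_union]
      by_cases h1 : i ∈ A <;> by_cases h2 : i ∈ B
      · simp [clanSymbol_pp h1 h2, h1]
      · simp [clanSymbol_cl (mem_sdiff.mpr ⟨h1, h2⟩), h1]
      · simp [clanSymbol_op (mem_sdiff.mpr ⟨h2, h1⟩), h2]
      · simp [clanSymbol_mm h1 h2, h1, h2]
    rw [htrue, hfalse, card_compl]
    have h1 := card_union_add_card_inter A B
    have h2 : (A ∪ B).card ≤ p + q := le_trans (card_le_card (subset_univ _)) (by simp)
    simp only [Fintype.card_fin]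
    omega

lemma buildClan_plusSet : (buildClan A B hAB hpref hA).plusSet = A := by
  ext i
  rw [Clan.plusSet, mem_filter]
  simp only [mem_univ, true_and, buildClan]
  by_cases h1 : i ∈ A <;> by_cases h2 : i ∈ B
  · simp [clanSymbol_pp h1 h2, h1]
  · have hi : i ∈ A \ B := mem_sdiff.mpr ⟨h1, h2⟩
    obtain ⟨hc1, hc2⟩ := comate_spec hAB hpref hi
    have hlt : comate A B i < i := by
      have := mate_gt hAB hpref hc1
      rwa [hc2] at this
    simp only [clanSymbol_cl hi, h1, iff_true]
    exact Or.inr ⟨comate A B i, rfl, hlt⟩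
  · have hi : i ∈ B \ A := mem_sdiff.mpr ⟨h2, h1⟩
    have hgt' : i < mate A B i := mate_gt hAB hpref hi
    simp only [clanSymbol_op hi, h1, iff_false]
    rintro (h | ⟨j, hj, hlt⟩)
    · exact absurd h (by simp)
    · injection hj with hj
      rw [← hj] at hlt
      exact absurd hlt (not_lt.mpr (le_of_lt hgt'))
  · simp [clanSymbol_mm h1 h2, h1]

lemma buildClan_tplusSet : (buildClan A B hAB hpref hA).tplusSet = B := by
  ext i
  rw [Clan.tplusSet, mem_filter]
  simp only [mem_univ, true_and, buildClan]
  by_cases h1 : i ∈ A <;> by_cases h2 : i ∈ B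
  · simp [clanSymbol_pp h1 h2, h2]
  · have hi : i ∈ A \ B := mem_sdiff.mpr ⟨h1, h2⟩
    obtain ⟨hc1, hc2⟩ := comate_spec hAB hpref hi
    have hlt : comate A B i < i := by
      have := mate_gt hAB hpref hc1
      rwa [hc2] at this
    simp only [clanSymbol_cl hi, h2, iff_false]
    rintro (h | ⟨j, hj, hlt'⟩)
    · exact absurd h (by simp)
    · injection hj with hj
      rw [← hj] at hlt'
      exact absurd hlt' (not_lt.mpr (le_of_lt hlt))
  · have hi : i ∈ B \ A := mem_sdiff.mpr ⟨h2, h1⟩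
    have hgt' : i < mate A B i := mate_gt hAB hpref hi
    simp only [clanSymbol_op hi, h2, iff_true]
    exact Or.inr ⟨mate A B i, rfl, hgt'⟩
  · simp [clanSymbol_mm h1 h2, h2]

lemma buildClan_avoids : (buildClan A B hAB hpref hA).Avoids1212 := by
  rintro ⟨i1, i2, i3, i4, h12, h23, h34, e1, e2⟩
  have he1 := clanSymbol_inl_lt hAB hpref e1 (lt_trans h12 h23)
  have he2 := clanSymbol_inl_lt hAB hpref e2 (lt_trans h23 h34)
  obtain ⟨ho1, hm1⟩ := he1
  obtain ⟨ho2, hm2⟩ := he2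
  have v12 : (i1 : ℕ) < (i2 : ℕ) := Fin.lt_def.mp h12
  have v23 : (i2 : ℕ) < (i3 : ℕ) := Fin.lt_def.mp h23
  have v34 : (i3 : ℕ) < (i4 : ℕ) := Fin.lt_def.mp h34
  have hb1 : hgt A B ((i1 : ℕ) + 1) ≤ hgt A B (i2 : ℕ) := by
    have key := mate_min hAB hpref ho1 ((i2 : ℕ) - 1) (by omega)
      (by rw [← hm1] at *; omega)
    have e : (i2 : ℕ) - 1 + 1 = (i2 : ℕ) := by omega
    rwa [e] at key
  have h2' : hgt A B ((i2 : ℕ) + 1) = hgt A B (i2 : ℕ) + 1 := hgt_succ_opener ho2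
  have h3' : hgt A B ((i2 : ℕ) + 1) ≤ hgt A B ((i3 : ℕ) + 1) := by
    have := mate_min hAB hpref ho2 (i3 : ℕ) (by omega) (by rw [← hm2] at *; omega)
    exact this
  have h4' : hgt A B ((i3 : ℕ) + 1) = hgt A B ((i1 : ℕ) + 1) - 1 := by
    have := (mate_closer hAB hpref ho1).2
    rwa [← hm1] at this
  omega

end Build


section Unique

open ClanAux

variable {p q : ℕ}

lemma mem_plusSet_iff (γ : Clan p q) (i : Fin (p + q)) :
    i ∈ γ.plusSet ↔ γ.symbol i = Sum.inr true ∨ ∃ j, γ.symbol i = Sum.inl j ∧ j < i := by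
  simp [Clan.plusSet]

lemma mem_tplusSet_iff (γ : Clan p q) (i : Fin (p + q)) :
    i ∈ γ.tplusSet ↔ γ.symbol i = Sum.inr true ∨ ∃ j, γ.symbol i = Sum.inl j ∧ i < j := by
  simp [Clan.tplusSet]

/-- the partner function of a clan (identity on signs). -/
def cpartner (γ : Clan p q) (i : Fin (p + q)) : Fin (p + q) :=
  Sum.elim id (fun _ => i) (γ.symbol i)

lemma cpartner_eq (γ : Clan p q) {i j : Fin (p + q)} (h : γ.symbol i = Sum.inl j) :
    cpartner γ i = j := by rw [cpartner, h]; rfl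

lemma clan_card (γ : Clan p q) : γ.plusSet.card = p ∧ γ.tplusSet.card = p := by
  classical
  have hmap1 : ∀ i ∈ γ.tplusSet, cpartner γ i ∈ γ.plusSet := by
    intro i hi
    rcases (mem_tplusSet_iff γ i).1 hi with h | ⟨j, hj, hij⟩
    · have : cpartner γ i = i := by rw [cpartner, h]; rfl
      rw [this, mem_plusSet_iff]; exact Or.inl h
    · rw [cpartner_eq γ hj, mem_plusSet_iff]
      exact Or.inr ⟨i, γ.mate_invol i j hj, hij⟩
  have hmap2 : ∀ i ∈ γ.plusSet, cpartner γ i ∈ γ.tplusSet := by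
    intro i hi
    rcases (mem_plusSet_iff γ i).1 hi with h | ⟨j, hj, hij⟩
    · have : cpartner γ i = i := by rw [cpartner, h]; rfl
      rw [this, mem_tplusSet_iff]; exact Or.inl h
    · rw [cpartner_eq γ hj, mem_tplusSet_iff]
      exact Or.inr ⟨i, γ.mate_invol i j hj, hij⟩
  have hinj : ∀ (S : Finset (Fin (p + q))),
      (∀ i ∈ S, γ.symbol i = Sum.inr true ∨ ∃ j, γ.symbol i = Sum.inl j) →
      Set.InjOn (cpartner γ) ↑S := by
    intro S hS a ha b hb hab
    rcases hS a (mem_coe.mp ha) with h1 | ⟨j1, h1⟩ <;>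
      rcases hS b (mem_coe.mp hb) with h2 | ⟨j2, h2⟩
    · have e1 : cpartner γ a = a := by rw [cpartner, h1]; rfl
      have e2 : cpartner γ b = b := by rw [cpartner, h2]; rfl
      rw [e1, e2] at hab; exact hab
    · exfalso
      have e1 : cpartner γ a = a := by rw [cpartner, h1]; rfl
      rw [e1, cpartner_eq γ h2] at hab
      have := γ.mate_invol b j2 h2
      rw [← hab, h1] at this
      exact absurd this (by simp)
    · exfalso
      have e2 : cpartner γ b = b := by rw [cpartner, h2]; rfl
      rw [e2, cpartner_eq γ h1] at hab
      have := γ.mate_invol a j1 h1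
      rw [hab, h2] at this
      exact absurd this (by simp)
    · rw [cpartner_eq γ h1, cpartner_eq γ h2] at hab
      have i1 := γ.mate_invol a j1 h1
      have i2 := γ.mate_invol b j2 h2
      rw [hab] at i1
      rw [i1] at i2
      exact Sum.inl.inj i2
  have hSp : ∀ i ∈ γ.plusSet, γ.symbol i = Sum.inr true ∨ ∃ j, γ.symbol i = Sum.inl j := by
    intro i hi
    rcases (mem_plusSet_iff γ i).1 hi with h | ⟨j, hj, _⟩
    exacts [Or.inl h, Or.inr ⟨j, hj⟩]
  have hSt : ∀ i ∈ γ.tplusSet, γ.symbol i = Sum.inr true ∨ ∃ j, γ.symbol i = Sum.inl j := by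
    intro i hi
    rcases (mem_tplusSet_iff γ i).1 hi with h | ⟨j, hj, _⟩
    exacts [Or.inl h, Or.inr ⟨j, hj⟩]
  have hcard : γ.plusSet.card = γ.tplusSet.card :=
    le_antisymm (card_le_card_of_injOn _ hmap2 (hinj _ hSp))
      (card_le_card_of_injOn _ hmap1 (hinj _ hSt))
  have hI : γ.plusSet ∩ γ.tplusSet = univ.filter (fun i => γ.symbol i = Sum.inr true) := by
    ext i
    simp only [mem_inter, mem_filter, mem_univ, true_and]
    constructor
    · rintro ⟨hp, ht⟩
      rcases (mem_plusSet_iff γ i).1 hp with h | ⟨j, hj, hlt⟩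
      · exact h
      · exfalso
        rcases (mem_tplusSet_iff γ i).1 ht with h | ⟨j', hj', hlt'⟩
        · rw [hj] at h; exact absurd h (by simp)
        · rw [hj] at hj'; injection hj' with e
          rw [e] at hlt; exact absurd (lt_trans hlt hlt') (lt_irrefl _)
    · intro h
      exact ⟨(mem_plusSet_iff γ i).2 (Or.inl h), (mem_tplusSet_iff γ i).2 (Or.inl h)⟩
  have hU : univ.filter (fun i => ¬(γ.symbol i = Sum.inr false)) = γ.plusSet ∪ γ.tplusSet := by
    ext i
    simp only [mem_filter, mem_univ, true_and, mem_union]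
    constructor
    · intro h
      rcases hsym : γ.symbol i with j | b
      · have hne := γ.mate_ne i j hsym
        rcases lt_or_gt_of_ne hne with hlt | hgt'
        · exact Or.inl ((mem_plusSet_iff γ i).2 (Or.inr ⟨j, hsym, hlt⟩))
        · exact Or.inr ((mem_tplusSet_iff γ i).2 (Or.inr ⟨j, hsym, hgt'⟩))
      · cases b
        · exact absurd hsym h
        · exact Or.inl ((mem_plusSet_iff γ i).2 (Or.inl hsym))
    · rintro (h | h)
      · rcases (mem_plusSet_iff γ i).1 h with h' | ⟨j, hj, _⟩
        · simp [h']
        · simp [hj]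
      · rcases (mem_tplusSet_iff γ i).1 h with h' | ⟨j, hj, _⟩
        · simp [h']
        · simp [hj]
  have hsplit := card_filter_add_card_filter_not
    (s := (univ : Finset (Fin (p + q)))) (p := fun i => γ.symbol i = Sum.inr false)
  have hui := card_union_add_card_inter γ.plusSet γ.tplusSet
  have hbal := γ.balance
  rw [hI] at hui
  rw [hU, card_univ, Fintype.card_fin] at hsplit
  omega

variable {A B : Finset (Fin (p + q))}
  (hAB : A.card = B.card) (hpref : ∀ i, ClanAux.cnt A i ≤ ClanAux.cnt B i)
  {γ : Clan p q} (hP : γ.plusSet = A) (hT : γ.tplusSet = B)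

section Classify
include hP hT

lemma symb_pp {i : Fin (p + q)} (h1 : i ∈ A) (h2 : i ∈ B) : γ.symbol i = Sum.inr true := by
  have hp := (mem_plusSet_iff γ i).1 (by rw [hP]; exact h1)
  have ht := (mem_tplusSet_iff γ i).1 (by rw [hT]; exact h2)
  rcases hp with h | ⟨j, hj, hlt⟩
  · exact h
  rcases ht with h | ⟨j', hj', hlt'⟩
  · rw [hj] at h; exact absurd h (by simp)
  · rw [hj] at hj'; injection hj' with e
    rw [e] at hlt
    exact absurd (lt_trans hlt hlt') (lt_irrefl _)

lemma symb_cl {i : Fin (p + q)} (hi : i ∈ A \ B) :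
    ∃ j, γ.symbol i = Sum.inl j ∧ j < i := by
  rw [mem_sdiff] at hi
  have hp := (mem_plusSet_iff γ i).1 (by rw [hP]; exact hi.1)
  have ht : ¬(γ.symbol i = Sum.inr true ∨ ∃ j, γ.symbol i = Sum.inl j ∧ i < j) := by
    rw [← mem_tplusSet_iff, hT]; exact hi.2
  rcases hp with h | hc
  · exact absurd (Or.inl h) ht
  · exact hc

lemma symb_op {i : Fin (p + q)} (hi : i ∈ B \ A) :
    ∃ j, γ.symbol i = Sum.inl j ∧ i < j := by
  rw [mem_sdiff] at hi
  have ht := (mem_tplusSet_iff γ i).1 (by rw [hT]; exact hi.1)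
  have hp : ¬(γ.symbol i = Sum.inr true ∨ ∃ j, γ.symbol i = Sum.inl j ∧ j < i) := by
    rw [← mem_plusSet_iff, hP]; exact hi.2
  rcases ht with h | hc
  · exact absurd (Or.inl h) hp
  · exact hc

lemma symb_mm {i : Fin (p + q)} (h1 : i ∉ A) (h2 : i ∉ B) : γ.symbol i = Sum.inr false := by
  have hp : ¬(γ.symbol i = Sum.inr true ∨ ∃ j, γ.symbol i = Sum.inl j ∧ j < i) := by
    rw [← mem_plusSet_iff, hP]; exact h1
  have ht : ¬(γ.symbol i = Sum.inr true ∨ ∃ j, γ.symbol i = Sum.inl j ∧ i < j) := by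
    rw [← mem_tplusSet_iff, hT]; exact h2
  rcases hsym : γ.symbol i with j | b
  · exfalso
    have hne := γ.mate_ne i j hsym
    rcases lt_or_gt_of_ne hne with hlt | hgt'
    · exact hp (Or.inr ⟨j, hsym, hlt⟩)
    · exact ht (Or.inr ⟨j, hsym, hgt'⟩)
  · cases b
    · rfl
    · exact absurd (Or.inl hsym) hp

lemma symb_arc {s t : Fin (p + q)} (hs : γ.symbol s = Sum.inl t) (hst : s < t) :
    s ∈ B \ A ∧ t ∈ A \ B := by
  have hts := γ.mate_invol s t hs
  constructor
  · by_cases h1 : s ∈ A <;> by_cases h2 : s ∈ B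
    · exfalso
      rw [symb_pp hP hT h1 h2] at hs
      exact absurd hs (by simp)
    · exfalso
      obtain ⟨j, hj, hlt⟩ := symb_cl hP hT (mem_sdiff.mpr ⟨h1, h2⟩)
      rw [hs] at hj; injection hj with e
      rw [e] at hst
      exact absurd (lt_trans hst hlt) (lt_irrefl _)
    · exact mem_sdiff.mpr ⟨h2, h1⟩
    · exfalso
      rw [symb_mm hP hT h1 h2] at hs
      exact absurd hs (by simp)
  · by_cases h1 : t ∈ A <;> by_cases h2 : t ∈ B
    · exfalso
      rw [symb_pp hP hT h1 h2] at hts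
      exact absurd hts (by simp)
    · exact mem_sdiff.mpr ⟨h1, h2⟩
    · exfalso
      obtain ⟨j, hj, hlt⟩ := symb_op hP hT (mem_sdiff.mpr ⟨h2, h1⟩)
      rw [hts] at hj; injection hj with e
      rw [e] at hst
      exact absurd (lt_trans hlt hst) (lt_irrefl _)
    · exfalso
      rw [symb_mm hP hT h1 h2] at hts
      exact absurd hts (by simp)

end Classify

section Arc
open ClanAux
include hAB hpref hP hT

variable (hav : γ.Avoids1212)
include hav

lemma arc_hgt {s t : Fin (p + q)} (hs : γ.symbol s = Sum.inl t) (hst : s < t) :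
    hgt A B ((t : ℕ) + 1) = hgt A B ((s : ℕ) + 1) - 1 := by
  obtain ⟨hsO, htC⟩ := symb_arc hP hT hs hst
  have hts := γ.mate_invol s t hs
  have hvst : (s : ℕ) < (t : ℕ) := Fin.lt_def.mp hst
  -- the two interval sets
  have hcard : ((B \ A).filter fun k => s < k ∧ k < t).card
      = ((A \ B).filter fun k => s < k ∧ k < t).card := by
    apply le_antisymm
    · apply card_le_card_of_injOn (cpartner γ)
      · intro a ha
        rw [mem_coe, mem_filter] at ha
        obtain ⟨haO, hsa, hat⟩ := ha
        obtain ⟨b, hab, halb⟩ := symb_op hP hT haO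
        rw [cpartner_eq γ hab]
        have hbt : b ≠ t := by
          intro e
          rw [e] at hab
          have := γ.mate_invol a t hab
          rw [hts] at this; injection this with e'
          rw [e'] at hsa; exact absurd hsa (lt_irrefl _)
        have hblt : b < t := by
          rcases lt_or_gt_of_ne hbt with h | h
          · exact h
          · exact absurd ⟨s, a, t, b, hsa, hat, h, hs, hab⟩ hav
        rw [mem_coe, mem_filter]
        exact ⟨(symb_arc hP hT hab halb).2, lt_trans hsa halb, hblt⟩
      · intro a ha b hb hab
        rw [mem_coe, mem_filter] at ha hb
        obtain ⟨ja, hja, -⟩ := symb_op hP hT ha.1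
        obtain ⟨jb, hjb, -⟩ := symb_op hP hT hb.1
        rw [cpartner_eq γ hja, cpartner_eq γ hjb] at hab
        have i1 := γ.mate_invol a ja hja
        have i2 := γ.mate_invol b jb hjb
        rw [hab] at i1
        rw [i1] at i2
        exact Sum.inl.inj i2
    · apply card_le_card_of_injOn (cpartner γ)
      · intro c hc
        rw [mem_coe, mem_filter] at hc
        obtain ⟨hcC, hsc, hct⟩ := hc
        obtain ⟨a, hca, halc⟩ := symb_cl hP hT hcC
        rw [cpartner_eq γ hca]
        have hac := γ.mate_invol c a hca
        have has : a ≠ s := by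
          intro e
          rw [e, hs] at hac; injection hac with e'
          rw [e'] at hct; exact absurd hct (lt_irrefl _)
        have hsla : s < a := by
          rcases lt_or_gt_of_ne has with h | h
          · exact absurd ⟨a, s, c, t, h, hsc, hct, hac, hs⟩ hav
          · exact h
        rw [mem_coe, mem_filter]
        exact ⟨(symb_arc hP hT hac halc).1, hsla, lt_trans halc hct⟩
      · intro a ha b hb hab
        rw [mem_coe, mem_filter] at ha hb
        obtain ⟨ja, hja, -⟩ := symb_cl hP hT ha.1
        obtain ⟨jb, hjb, -⟩ := symb_cl hP hT hb.1
        rw [cpartner_eq γ hja, cpartner_eq γ hjb] at hab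
        have i1 := γ.mate_invol a ja hja
        have i2 := γ.mate_invol b jb hjb
        rw [hab] at i1
        rw [i1] at i2
        exact Sum.inl.inj i2
  -- counting
  have hle : (s : ℕ) + 1 ≤ (t : ℕ) + 1 := by omega
  have eB := cnt_diff B hle
  have eA := cnt_diff A hle
  have hsplitB : (B.filter fun k : Fin (p + q) => (s : ℕ) + 1 ≤ (k : ℕ) ∧ (k : ℕ) < (t : ℕ) + 1).card
      = ((B \ A).filter fun k : Fin (p + q) => (s : ℕ) + 1 ≤ (k : ℕ) ∧ (k : ℕ) < (t : ℕ) + 1).card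
        + ((A ∩ B).filter fun k : Fin (p + q) => (s : ℕ) + 1 ≤ (k : ℕ) ∧ (k : ℕ) < (t : ℕ) + 1).card := by
    rw [inter_comm A B,
      ← card_union_of_disjoint (disjoint_filter_filter (disjoint_sdiff_inter B A)),
      ← filter_union, sdiff_union_inter]
  have hsplitA : (A.filter fun k : Fin (p + q) => (s : ℕ) + 1 ≤ (k : ℕ) ∧ (k : ℕ) < (t : ℕ) + 1).card
      = ((A \ B).filter fun k : Fin (p + q) => (s : ℕ) + 1 ≤ (k : ℕ) ∧ (k : ℕ) < (t : ℕ) + 1).card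
        + ((A ∩ B).filter fun k : Fin (p + q) => (s : ℕ) + 1 ≤ (k : ℕ) ∧ (k : ℕ) < (t : ℕ) + 1).card := by
    rw [← card_union_of_disjoint (disjoint_filter_filter (disjoint_sdiff_inter A B))]
    rw [← filter_union, sdiff_union_inter]
  have hBint : ((B \ A).filter fun k : Fin (p + q) => (s : ℕ) + 1 ≤ (k : ℕ) ∧ (k : ℕ) < (t : ℕ) + 1)
      = ((B \ A).filter fun k => s < k ∧ k < t) := by
    ext k
    simp only [mem_filter, mem_sdiff, Fin.lt_def]
    constructor
    · rintro ⟨⟨hkB, hkA⟩, h1, h2⟩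
      refine ⟨⟨hkB, hkA⟩, by omega, ?_⟩
      rcases lt_or_eq_of_le (Nat.lt_succ_iff.mp h2) with h | h
      · exact h
      · exfalso
        have : k = t := Fin.ext h
        rw [this] at hkB
        rw [mem_sdiff] at htC
        exact htC.2 hkB
    · rintro ⟨hk, h1, h2⟩
      exact ⟨hk, by omega, by omega⟩
  have hAint : ((A \ B).filter fun k : Fin (p + q) => (s : ℕ) + 1 ≤ (k : ℕ) ∧ (k : ℕ) < (t : ℕ) + 1)
      = insert t ((A \ B).filter fun k => s < k ∧ k < t) := by
    ext k
    simp only [mem_filter, mem_insert, Fin.lt_def]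
    constructor
    · rintro ⟨hk, h1, h2⟩
      rcases lt_or_eq_of_le (Nat.lt_succ_iff.mp h2) with h | h
      · exact Or.inr ⟨hk, by omega, h⟩
      · exact Or.inl (Fin.ext h)
    · rintro (rfl | ⟨hk, h1, h2⟩)
      · exact ⟨htC, by omega, by omega⟩
      · exact ⟨hk, by omega, by omega⟩
  have htnot : t ∉ ((A \ B).filter fun k => s < k ∧ k < t) := by
    simp [mem_filter]
  rw [hBint] at hsplitB
  rw [hAint, card_insert_of_notMem htnot] at hsplitA
  unfold hgt
  rw [eB, eA, hsplitB, hsplitA, hcard]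
  push_cast
  ring

lemma arc_is_mate {s t' : Fin (p + q)} (hsO : s ∈ B \ A) (hs : γ.symbol s = Sum.inl t') :
    t' = mate A B s := by
  have hst : s < t' := by
    obtain ⟨j, hj, hlt⟩ := symb_op hP hT hsO
    rw [hs] at hj; injection hj with e; rw [← e] at hlt; exact hlt
  have hdrop := arc_hgt hAB hpref hP hT hav hs hst
  have hmem : t' ∈ mateT A B s := by
    simp only [mateT, mem_filter, mem_univ, true_and]
    exact ⟨hst, by omega⟩
  have hle := mate_le hAB hpref hsO hmem
  rcases eq_or_lt_of_le hle with he | hlt2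
  · exact he.symm
  · exfalso
    have htC := (mate_closer hAB hpref hsO).1
    obtain ⟨s1, hs1sym, hs1lt⟩ := symb_cl hP hT htC
    have hs1inv : γ.symbol s1 = Sum.inl (mate A B s) := γ.mate_invol _ _ hs1sym
    have hne : s1 ≠ s := by
      intro e
      rw [e, hs] at hs1inv
      injection hs1inv with e'
      rw [e'] at hlt2
      exact absurd hlt2 (lt_irrefl _)
    have hs1gt : s < s1 := by
      rcases lt_or_gt_of_ne hne with h | h
      · exact absurd ⟨s1, s, mate A B s, t', h, mate_gt hAB hpref hsO, hlt2, hs1inv, hs⟩ hav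
      · exact h
    have harc2 := arc_hgt hAB hpref hP hT hav hs1inv hs1lt
    have hclos := (mate_closer hAB hpref hsO).2
    have hvs1 : (s : ℕ) < (s1 : ℕ) := Fin.lt_def.mp hs1gt
    have hvs1m : (s1 : ℕ) < (mate A B s : ℕ) := Fin.lt_def.mp hs1lt
    have hmin : hgt A B ((s : ℕ) + 1) ≤ hgt A B ((s1 : ℕ) - 1 + 1) :=
      mate_min hAB hpref hsO ((s1 : ℕ) - 1) (by omega) (by omega)
    have e1 : (s1 : ℕ) - 1 + 1 = (s1 : ℕ) := by omega
    rw [e1] at hmin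
    have hop : hgt A B ((s1 : ℕ) + 1) = hgt A B (s1 : ℕ) + 1 :=
      hgt_succ_opener (symb_arc hP hT hs1inv hs1lt).1
    omega

end Arc

lemma clan_ext {γ γ' : Clan p q} (h : ∀ i, γ.symbol i = γ'.symbol i) : γ = γ' := by
  obtain ⟨s, _, _, _⟩ := γ
  obtain ⟨s', _, _, _⟩ := γ'
  have hss : s = s' := funext h
  subst hss
  rfl

include hAB hpref hP hT in
lemma clan_eq_build (hav : γ.Avoids1212) (hA : A.card = p) :
    γ = buildClan A B hAB hpref hA := by
  apply clan_ext
  intro i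
  show γ.symbol i = ClanAux.clanSymbol A B i
  by_cases h1 : i ∈ A <;> by_cases h2 : i ∈ B
  · rw [ClanAux.clanSymbol_pp h1 h2]; exact symb_pp hP hT h1 h2
  · have hi : i ∈ A \ B := mem_sdiff.mpr ⟨h1, h2⟩
    obtain ⟨j, hj, hlt⟩ := symb_cl hP hT hi
    have hinv := γ.mate_invol _ _ hj
    have hjO : j ∈ B \ A := (symb_arc hP hT hinv hlt).1
    have hmate : i = ClanAux.mate A B j := arc_is_mate hAB hpref hP hT hav hjO hinv
    obtain ⟨hc1, hc2⟩ := ClanAux.comate_spec hAB hpref hi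
    have hco : ClanAux.comate A B i = j :=
      ClanAux.mate_inj hAB hpref hc1 hjO (by rw [hc2, ← hmate])
    rw [ClanAux.clanSymbol_cl hi, hco, hj]
  · have hi : i ∈ B \ A := mem_sdiff.mpr ⟨h2, h1⟩
    obtain ⟨j, hj, -⟩ := symb_op hP hT hi
    rw [ClanAux.clanSymbol_op hi, hj, arc_is_mate hAB hpref hP hT hav hi hj]
  · rw [ClanAux.clanSymbol_mm h1 h2]; exact symb_mm hP hT h1 h2

end Unique

section PermCount

lemma card_fin_filter_val {n : ℕ} (P : ℕ → Prop) [DecidablePred P] :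
    ((univ : Finset (Fin n)).filter fun k : Fin n => P (k : ℕ)).card
      = ((Finset.range n).filter P).card := by
  apply card_bij (fun (k : Fin n) _ => (k : ℕ))
  · intro a ha
    rw [mem_filter] at ha ⊢
    exact ⟨mem_range.mpr a.isLt, ha.2⟩
  · intro a _ b _ h; exact Fin.ext h
  · intro b hb
    rw [mem_filter, mem_range] at hb
    exact ⟨⟨b, hb.1⟩, mem_filter.mpr ⟨mem_univ _, hb.2⟩, rfl⟩

lemma card_lt_val {n m : ℕ} (h : m ≤ n) :
    ((univ : Finset (Fin n)).filter fun k : Fin n => (k : ℕ) < m).card = m := by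
  rw [card_fin_filter_val (fun x => x < m)]
  have : (Finset.range n).filter (fun x => x < m) = Finset.range m := by
    ext a; simp only [mem_filter, mem_range]; omega
  rw [this, card_range]

lemma card_between {n m : ℕ} (a : ℕ) (h : m ≤ n) :
    ((univ : Finset (Fin n)).filter fun k : Fin n => a < (k : ℕ) ∧ (k : ℕ) < m).card = m - (a + 1) := by
  rw [card_fin_filter_val (fun x => a < x ∧ x < m)]
  have : (Finset.range n).filter (fun x => a < x ∧ x < m) = Finset.Ioo a m := by
    ext x; simp only [mem_filter, mem_range, mem_Ioo]; omega
  rw [this, Nat.card_Ioo]; omega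

lemma card_gt_val {n : ℕ} (a : ℕ) :
    ((univ : Finset (Fin n)).filter fun k : Fin n => a < (k : ℕ)).card = n - (a + 1) := by
  rw [card_fin_filter_val (fun x => a < x)]
  have : (Finset.range n).filter (fun x => a < x) = Finset.Ioo a n := by
    ext x; simp only [mem_filter, mem_range, mem_Ioo]; omega
  rw [this, Nat.card_Ioo]; omega

lemma card_filter_perm {n : ℕ} (w : Equiv.Perm (Fin n)) (P : Fin n → Prop) [DecidablePred P] :
    (univ.filter fun i => P (w i)).card = (univ.filter P).card := by
  apply card_bij (fun i _ => w i)
  · intro a ha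
    rw [mem_filter] at ha ⊢
    exact ⟨mem_univ _, ha.2⟩
  · intro a _ b _ h; exact w.injective h
  · intro b hb
    rw [mem_filter] at hb
    exact ⟨w.symm b, mem_filter.mpr ⟨mem_univ _, by simpa using hb.2⟩, by simp⟩

end PermCount

/-- If `(u,v)` is a `(p,q)`-pair (`u` a shuffle of `1,…,q`
and `q+1,…,n`; `v` a shuffle of `1,…,p` and `p+1,…,n`) with `w₀u ≥ v` in the
Bruhat order, then there is a unique `(p,q)`-clan `γ` avoiding `(1,2,1,2)`
with `u(γ) = w₀u` and `v(γ) = v`. -/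
theorem exists_unique_clan_of_pq_pair {p q : ℕ} (hn : 1 ≤ p + q)
    (u v : Equiv.Perm (Fin (p + q)))
    (hu : ∀ k l : Fin (p + q), k < l → (l.val < q ∨ q ≤ k.val) →
      u.symm k < u.symm l)
    (hv : ∀ k l : Fin (p + q), k < l → (l.val < p ∨ p ≤ k.val) →
      v.symm k < v.symm l)
    (hcomp : ∀ i j : ℕ, 1 ≤ i → i ≤ p + q → 1 ≤ j → j ≤ p + q →
      rankMatrix (Fin.revPerm * u) i j ≤ rankMatrix v i j) :
    ∃! γ : Clan p q, γ.Avoids1212 ∧ IsUPerm γ (Fin.revPerm * u) ∧ IsVPerm γ v := by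
  classical
  set w : Equiv.Perm (Fin (p + q)) := Fin.revPerm * u with hw
  set A : Finset (Fin (p + q)) := univ.filter (fun i => ((w i : Fin (p + q)) : ℕ) < p) with hA'
  set B : Finset (Fin (p + q)) := univ.filter (fun i => ((v i : Fin (p + q)) : ℕ) < p) with hB'
  have memA : ∀ i, i ∈ A ↔ ((w i : Fin (p + q)) : ℕ) < p := by intro i; rw [hA']; simp
  have memB : ∀ i, i ∈ B ↔ ((v i : Fin (p + q)) : ℕ) < p := by intro i; rw [hB']; simp
  have hws : ∀ x : Fin (p + q), w.symm x = u.symm x.rev := fun x => by rw [hw]; rfl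
  have wanti : ∀ a b : Fin (p + q),
      (((a : ℕ) < p ∧ (b : ℕ) < p) ∨ (p ≤ (a : ℕ) ∧ p ≤ (b : ℕ))) → a < b →
      w.symm b < w.symm a := by
    intro a b hc hab
    have h1 : b.rev < a.rev := Fin.rev_lt_rev.mpr hab
    have h2 : ((a.rev : ℕ) < q ∨ q ≤ (b.rev : ℕ)) := by
      have ha := a.isLt; have hb := b.isLt
      rw [Fin.val_rev, Fin.val_rev]
      rcases hc with ⟨h3, h4⟩ | ⟨h3, h4⟩
      · right; omega
      · left; omega
    have := hu b.rev a.rev h1 h2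
    rw [hws, hws]
    exact this
  have wlt : ∀ i j : Fin (p + q),
      (((w i : ℕ) < p ∧ (w j : ℕ) < p) ∨ (p ≤ (w i : ℕ) ∧ p ≤ (w j : ℕ))) →
      (i < j ↔ w j < w i) := by
    intro i j hc
    constructor
    · intro hij
      rcases lt_trichotomy (w i) (w j) with h | h | h
      · exfalso
        have := wanti (w i) (w j) hc h
        rw [Equiv.symm_apply_apply, Equiv.symm_apply_apply] at this
        exact absurd (lt_trans hij this) (lt_irrefl _)
      · exact absurd (w.injective h) (Fin.ne_of_lt hij)
      · exact h
    · intro h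
      have := wanti (w j) (w i) (by tauto) h
      rw [Equiv.symm_apply_apply, Equiv.symm_apply_apply] at this
      exact this
  have vlt : ∀ i j : Fin (p + q),
      (((v i : ℕ) < p ∧ (v j : ℕ) < p) ∨ (p ≤ (v i : ℕ) ∧ p ≤ (v j : ℕ))) →
      (i < j ↔ v i < v j) := by
    intro i j hc
    constructor
    · intro hij
      rcases lt_trichotomy (v i) (v j) with h | h | h
      · exact h
      · exact absurd (v.injective h) (Fin.ne_of_lt hij)
      · exfalso
        have := hv (v j) (v i) h (by tauto)
        rw [Equiv.symm_apply_apply, Equiv.symm_apply_apply] at this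
        exact absurd (lt_trans hij this) (lt_irrefl _)
    · intro h
      have := hv (v i) (v j) h (by tauto)
      rw [Equiv.symm_apply_apply, Equiv.symm_apply_apply] at this
      exact this
  have hA : A.card = p := by
    rw [hA', card_filter_perm w (fun k => (k : ℕ) < p), card_lt_val (by omega)]
  have hB : B.card = p := by
    rw [hB', card_filter_perm v (fun k => (k : ℕ) < p), card_lt_val (by omega)]
  have hAB : A.card = B.card := by rw [hA, hB]
  have hrankA : ∀ i : ℕ, ClanAux.cnt A i = rankMatrix w i p := by
    intro i
    rw [hA']
    unfold ClanAux.cnt rankMatrix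
    rw [filter_filter]
    congr 1
    apply filter_congr
    intro k _
    exact and_comm
  have hrankB : ∀ i : ℕ, ClanAux.cnt B i = rankMatrix v i p := by
    intro i
    rw [hB']
    unfold ClanAux.cnt rankMatrix
    rw [filter_filter]
    congr 1
    apply filter_congr
    intro k _
    exact and_comm
  have hpref : ∀ i, ClanAux.cnt A i ≤ ClanAux.cnt B i := by
    intro i
    rcases Nat.eq_zero_or_pos i with rfl | hi
    · have h1 : ClanAux.cnt A 0 = 0 := by
        unfold ClanAux.cnt
        rw [filter_false_of_mem (fun k _ => by omega)]
        exact card_empty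
      rw [h1]; exact Nat.zero_le _
    · by_cases hip : i ≤ p + q
      · by_cases hp0 : p = 0
        · have h1 : ClanAux.cnt A i ≤ A.card := card_filter_le _ _
          rw [hA] at h1
          omega
        · rw [hrankA, hrankB]
          exact hcomp i p hi hip (by omega) (by omega)
      · rw [ClanAux.cnt_of_ge A (by omega), ClanAux.cnt_of_ge B (by omega), hA, hB]
  have hUof : ∀ γ : Clan p q, γ.plusSet = A → IsUPerm γ w := by
    intro γ hPeq i
    constructor
    · intro hi
      rw [hPeq] at hi ⊢
      have hiA : (w i : ℕ) < p := (memA i).1 hi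
      have himg : (A.filter fun j => j < i).image w
          = univ.filter fun k : Fin (p + q) => ((w i : ℕ) < (k : ℕ) ∧ (k : ℕ) < p) := by
        ext k
        simp only [mem_image, mem_filter, mem_univ, true_and]
        constructor
        · rintro ⟨j, ⟨hjA, hji⟩, rfl⟩
          have hjp : (w j : ℕ) < p := (memA j).1 hjA
          exact ⟨Fin.lt_def.mp ((wlt j i (Or.inl ⟨hjp, hiA⟩)).1 hji), hjp⟩
        · rintro ⟨hki, hkp⟩
          refine ⟨w.symm k, ⟨?_, ?_⟩, by simp⟩
          · exact (memA _).2 (by simpa using hkp)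
          · apply (wlt (w.symm k) i (Or.inl ⟨by simpa using hkp, hiA⟩)).2
            rw [Equiv.apply_symm_apply]
            exact Fin.lt_def.mpr hki
      have hcard : (A.filter fun j => j < i).card = p - ((w i : ℕ) + 1) := by
        rw [← card_image_of_injective (A.filter fun j => j < i) w.injective, himg,
          card_between _ (by omega)]
      rw [hcard]
      omega
    · intro hi
      rw [hPeq] at hi ⊢
      have hiA : p ≤ (w i : ℕ) := by
        by_contra hcon; push_neg at hcon; exact hi ((memA i).2 hcon)
      have himg : ((univ.filter fun j => j ∉ A ∧ j < i)).image w
          = univ.filter fun k : Fin (p + q) => (w i : ℕ) < (k : ℕ) := by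
        ext k
        simp only [mem_image, mem_filter, mem_univ, true_and]
        constructor
        · rintro ⟨j, ⟨hjA, hji⟩, rfl⟩
          have hjp : p ≤ (w j : ℕ) := by
            by_contra hcon; push_neg at hcon; exact hjA ((memA j).2 hcon)
          exact Fin.lt_def.mp ((wlt j i (Or.inr ⟨hjp, hiA⟩)).1 hji)
        · intro hki
          have hkp : p ≤ (k : ℕ) := by omega
          refine ⟨w.symm k, ⟨?_, ?_⟩, by simp⟩
          · intro hmem
            have := (memA _).1 hmem
            rw [Equiv.apply_symm_apply] at this
            omega
          · apply (wlt (w.symm k) i (Or.inr ⟨by simpa using hkp, hiA⟩)).2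
            rw [Equiv.apply_symm_apply]
            exact Fin.lt_def.mpr hki
      have hcard : (univ.filter fun j => j ∉ A ∧ j < i).card = (p + q) - ((w i : ℕ) + 1) := by
        rw [← card_image_of_injective _ w.injective, himg, card_gt_val]
      rw [hcard]
      have := (w i).isLt
      omega
  have hVof : ∀ γ : Clan p q, γ.tplusSet = B → IsVPerm γ v := by
    intro γ hTeq i
    constructor
    · intro hi
      rw [hTeq] at hi ⊢
      have hiB : (v i : ℕ) < p := (memB i).1 hi
      have himg : (B.filter fun j => j < i).image v
          = univ.filter fun k : Fin (p + q) => (k : ℕ) < ((v i : ℕ)) := by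
        ext k
        simp only [mem_image, mem_filter, mem_univ, true_and]
        constructor
        · rintro ⟨j, ⟨hjB, hji⟩, rfl⟩
          exact Fin.lt_def.mp ((vlt j i (Or.inl ⟨(memB j).1 hjB, hiB⟩)).1 hji)
        · intro hki
          refine ⟨v.symm k, ⟨?_, ?_⟩, by simp⟩
          · refine (memB _).2 ?_
            rw [Equiv.apply_symm_apply]
            omega
          · apply (vlt (v.symm k) i (Or.inl ⟨by rw [Equiv.apply_symm_apply]; omega, hiB⟩)).2
            rw [Equiv.apply_symm_apply]
            exact Fin.lt_def.mpr hki
      have hcard : (B.filter fun j => j < i).card = (v i : ℕ) := by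
        rw [← card_image_of_injective _ v.injective, himg, card_lt_val (by omega)]
      rw [hcard]
    · intro hi
      rw [hTeq] at hi ⊢
      have hiB : p ≤ (v i : ℕ) := by
        by_contra hcon; push_neg at hcon; exact hi ((memB i).2 hcon)
      have himg : (univ.filter fun j => j ∉ B ∧ j < i).image v
          = univ.filter fun k : Fin (p + q) => (p ≤ (k : ℕ) ∧ (k : ℕ) < (v i : ℕ)) := by
        ext k
        simp only [mem_image, mem_filter, mem_univ, true_and]
        constructor
        · rintro ⟨j, ⟨hjB, hji⟩, rfl⟩
          have hjp : p ≤ (v j : ℕ) := by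
            by_contra hcon; push_neg at hcon; exact hjB ((memB j).2 hcon)
          exact ⟨hjp, Fin.lt_def.mp ((vlt j i (Or.inr ⟨hjp, hiB⟩)).1 hji)⟩
        · rintro ⟨hkp, hki⟩
          refine ⟨v.symm k, ⟨?_, ?_⟩, by simp⟩
          · intro hmem
            have := (memB _).1 hmem
            rw [Equiv.apply_symm_apply] at this
            omega
          · apply (vlt (v.symm k) i (Or.inr ⟨by rw [Equiv.apply_symm_apply]; exact hkp, hiB⟩)).2
            rw [Equiv.apply_symm_apply]
            exact Fin.lt_def.mpr hki
      have hcard : (univ.filter fun j => j ∉ B ∧ j < i).card = (v i : ℕ) - p := by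
        rw [← card_image_of_injective _ v.injective, himg,
          card_fin_filter_val (fun x => p ≤ x ∧ x < (v i : ℕ))]
        have he : (Finset.range (p + q)).filter (fun x => p ≤ x ∧ x < (v i : ℕ))
            = Finset.Ico p (v i : ℕ) := by
          ext x
          simp only [mem_filter, mem_range, mem_Ico]
          have := (v i).isLt
          omega
        rw [he, Nat.card_Ico]
      rw [hcard]
      omega
  have hU2 : ∀ γ : Clan p q, IsUPerm γ w → γ.plusSet = A := by
    intro γ hiu
    have hcardP := (clan_card γ).1
    ext i
    constructor
    · intro hi
      have h1 := (hiu i).1 hi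
      exact (memA i).2 (by omega)
    · intro hi
      by_contra hnot
      have h2 := (hiu i).2 hnot
      have hsub : (univ.filter fun j => j ∉ γ.plusSet ∧ j < i) ⊆ γ.plusSetᶜ := by
        intro j hj
        rw [mem_filter] at hj
        exact mem_compl.mpr hj.2.1
      have hlt : (univ.filter fun j => j ∉ γ.plusSet ∧ j < i).card < (γ.plusSetᶜ).card := by
        apply card_lt_card
        rw [ssubset_iff_of_subset hsub]
        exact ⟨i, mem_compl.mpr hnot, by simp⟩
      have hcompl : (γ.plusSetᶜ).card = q := by
        rw [card_compl, hcardP, Fintype.card_fin]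
        omega
      have hiA := (memA i).1 hi
      omega
  have hV2 : ∀ γ : Clan p q, IsVPerm γ v → γ.tplusSet = B := by
    intro γ hiv
    have hcardT := (clan_card γ).2
    ext i
    constructor
    · intro hi
      have h1 := (hiv i).1 hi
      have hlt : (γ.tplusSet.filter fun j => j < i).card < γ.tplusSet.card := by
        apply card_lt_card
        rw [ssubset_iff_of_subset (filter_subset _ _)]
        exact ⟨i, hi, by simp⟩
      exact (memB i).2 (by omega)
    · intro hi
      by_contra hnot
      have h2 := (hiv i).2 hnot
      have hiB := (memB i).1 hi
      omega
  refine ⟨buildClan A B hAB hpref hA,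
    ⟨buildClan_avoids A B hAB hpref hA,
     hUof _ (buildClan_plusSet A B hAB hpref hA),
     hVof _ (buildClan_tplusSet A B hAB hpref hA)⟩, ?_⟩
  rintro γ' ⟨hav', hU', hV'⟩
  exact clan_eq_build hAB hpref (hU2 γ' hU') (hV2 γ' hV') hav' hA
end
end

section
/- For every (p,q)-clan γ (n = p+q), one has v(γ) ≤ u(γ) in the Bruhat order on S_n; that is, r_{v(γ)}(i,j) ≥ r_{u(γ)}(i,j) for all i,j ∈ {1,…,n}. -/
open Finset Module

noncomputable section

namespace Aux
variable {n : ℕ}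

def rk (A : Finset (Fin n)) (k : Fin n) : ℕ := (A.filter (· < k)).card

lemma rk_def (A : Finset (Fin n)) (k : Fin n) : rk A k = (A.filter fun x => x < k).card := rfl

lemma rk_lt_card {A : Finset (Fin n)} {k : Fin n} (hk : k ∈ A) : rk A k < A.card :=
  Finset.card_lt_card (Finset.filter_ssubset.mpr ⟨k, hk, lt_irrefl k⟩)

lemma rk_strictMono {A : Finset (Fin n)} {k1 k2 : Fin n} (h1 : k1 ∈ A) (h : k1 < k2) :
    rk A k1 < rk A k2 := by
  apply Finset.card_lt_card
  constructor
  · intro x hx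
    simp only [Finset.mem_filter] at hx ⊢
    exact ⟨hx.1, lt_trans hx.2 h⟩
  · intro hc
    have := hc (Finset.mem_filter.mpr ⟨h1, h⟩)
    simp at this

lemma rk_injOn {A : Finset (Fin n)} : Set.InjOn (rk A) A := by
  intro k1 h1 k2 h2 he
  rcases lt_trichotomy k1 k2 with h | h | h
  · exact absurd he (Nat.ne_of_lt (rk_strictMono h1 h))
  · exact h
  · exact absurd he.symm (Nat.ne_of_lt (rk_strictMono h2 h))

lemma rk_image (A : Finset (Fin n)) : A.image (rk A) = Finset.range A.card := by
  apply Finset.eq_of_subset_of_card_le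
  · intro r hr
    simp only [Finset.mem_image] at hr
    obtain ⟨k, hk, rfl⟩ := hr
    exact Finset.mem_range.mpr (rk_lt_card hk)
  · rw [Finset.card_range, Finset.card_image_of_injOn rk_injOn]

lemma count_rk (A : Finset (Fin n)) (i : ℕ) (P : ℕ → Prop) [DecidablePred P] :
    (A.filter fun k => k.val < i ∧ P (rk A k)).card
      = ((Finset.range ((A.filter fun k => k.val < i).card)).filter P).card := by
  set a := (A.filter fun k => k.val < i).card with ha
  have ha' : a ≤ A.card := Finset.card_le_card (Finset.filter_subset _ _)
  have key : ∀ k ∈ A, (k.val < i ↔ rk A k < a) := by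
    intro k hk
    constructor
    · intro hki
      apply Finset.card_lt_card
      constructor
      · intro x hx
        simp only [Finset.mem_filter] at hx ⊢
        exact ⟨hx.1, lt_of_lt_of_le (Fin.lt_def.mp hx.2) (le_of_lt hki)⟩
      · intro hc
        have := hc (Finset.mem_filter.mpr ⟨hk, hki⟩)
        simp at this
    · intro hr
      by_contra hki
      have : (A.filter fun k => k.val < i) ⊆ A.filter (· < k) := by
        intro x hx
        simp only [Finset.mem_filter] at hx ⊢
        exact ⟨hx.1, Fin.lt_def.mpr (lt_of_lt_of_le hx.2 (le_of_not_gt hki))⟩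
      exact absurd hr (not_lt_of_ge (Finset.card_le_card this))
  have e1 : (A.filter fun k => k.val < i ∧ P (rk A k))
      = A.filter fun k => rk A k < a ∧ P (rk A k) := by
    apply Finset.filter_congr
    intro k hk
    exact and_congr_left fun _ => key k hk
  rw [e1]
  have e2 : (A.filter fun k => rk A k < a ∧ P (rk A k)).card
      = ((A.image (rk A)).filter fun r => r < a ∧ P r).card := by
    rw [Finset.filter_image]
    exact (Finset.card_image_of_injOn (rk_injOn.mono (by
      intro x hx; exact (Finset.mem_filter.mp hx).1))).symm
  rw [e2, rk_image]
  congr 1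
  ext r
  simp only [Finset.mem_filter, Finset.mem_range]
  exact ⟨fun h => ⟨h.2.1, h.2.2⟩, fun h => ⟨lt_of_lt_of_le h.1 ha', h.1, h.2⟩⟩

end Aux

namespace Aux3

lemma count_ge (a m j : ℕ) : ((Finset.range a).filter fun r => m ≤ j + r).card = a - (m - j) := by
  rw [show ((Finset.range a).filter fun r => m ≤ j + r) = Finset.Ico (m - j) a by
    ext r; simp only [Finset.mem_filter, Finset.mem_range, Finset.mem_Ico]; omega]
  rw [Nat.card_Ico]

lemma count_lt (a t : ℕ) : ((Finset.range a).filter fun r => r < t).card = min a t := by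
  rw [show ((Finset.range a).filter fun r => r < t) = Finset.range (min a t) by
    ext r; simp only [Finset.mem_filter, Finset.mem_range]; omega]
  rw [Finset.card_range]

lemma count_lt' (a m j : ℕ) : ((Finset.range a).filter fun r => m + r < j).card = min a (j - m) := by
  rw [show ((Finset.range a).filter fun r => m + r < j) = Finset.range (min a (j - m)) by
    ext r; simp only [Finset.mem_filter, Finset.mem_range]; omega]
  rw [Finset.card_range]

lemma prefix_card {n : ℕ} (i : ℕ) (hi : i ≤ n) :
    ((univ : Finset (Fin n)).filter fun k => k.val < i).card = i := by
  have himg : ((univ : Finset (Fin n)).filter fun k => k.val < i).image Fin.val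
      = Finset.range i := by
    ext m
    simp only [Finset.mem_image, Finset.mem_filter, Finset.mem_univ, true_and, Finset.mem_range]
    constructor
    · rintro ⟨k, hk, rfl⟩; exact hk
    · intro hm; exact ⟨⟨m, lt_of_lt_of_le hm hi⟩, hm, rfl⟩
  rw [← Finset.card_image_of_injective _ Fin.val_injective, himg, Finset.card_range]

end Aux3

namespace Aux2
open Clan
variable {p q : ℕ} (γ : Clan p q)

/-- the mate map: arcs swap endpoints, signs fixed. -/
def mateF (k : Fin (p + q)) : Fin (p + q) :=
  match h : γ.symbol k with
  | Sum.inl j => j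
  | Sum.inr _ => k

lemma mateF_eq_of_inl {k j : Fin (p + q)} (h : γ.symbol k = Sum.inl j) : mateF γ k = j := by
  unfold mateF; split <;> simp_all

lemma mateF_eq_of_inr {k : Fin (p + q)} {b : Bool} (h : γ.symbol k = Sum.inr b) : mateF γ k = k := by
  unfold mateF; split <;> simp_all

lemma mateF_invol (k : Fin (p + q)) : mateF γ (mateF γ k) = k := by
  rcases h : γ.symbol k with j | b
  · rw [mateF_eq_of_inl γ h, mateF_eq_of_inl γ (γ.mate_invol _ _ h)]
  · rw [mateF_eq_of_inr γ h, mateF_eq_of_inr γ h]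

lemma mateF_inj : Function.Injective (mateF γ) := by
  intro k1 k2 h
  have := congrArg (mateF γ) h
  rwa [mateF_invol, mateF_invol] at this

/-- a ≤ b : plus prefix injects into tplus prefix -/
lemma card_plus_prefix_le (i : ℕ) :
    ((γ.plusSet.filter fun k => k.val < i)).card
      ≤ ((γ.tplusSet.filter fun k => k.val < i)).card := by
  apply Finset.card_le_card_of_injOn (mateF γ)
  · intro k hk
    simp only [Finset.mem_coe, Finset.mem_filter, plusSet, tplusSet, Finset.mem_univ, true_and] at hk ⊢
    obtain ⟨hmem, hki⟩ := hk
    rcases hmem with h | ⟨j, hj, hjk⟩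
    · rw [mateF_eq_of_inr γ h]
      exact ⟨Or.inl h, hki⟩
    · rw [mateF_eq_of_inl γ hj]
      refine ⟨Or.inr ⟨k, γ.mate_invol _ _ hj, hjk⟩, ?_⟩
      exact lt_trans (Fin.lt_def.mp hjk) hki
  · exact fun k1 _ k2 _ h => mateF_inj γ h

set_option maxRecDepth 10000 in
/-- |plusSet| = p -/
lemma card_plusSet : γ.plusSet.card = p := by
  classical
  set Sp := (univ.filter fun i => γ.symbol i = Sum.inr true) with hSp
  set Sm := (univ.filter fun i => γ.symbol i = Sum.inr false) with hSm
  set O := (univ.filter fun k => ∃ j, γ.symbol k = Sum.inl j ∧ k < j) with hO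
  set C := (univ.filter fun k => ∃ j, γ.symbol k = Sum.inl j ∧ j < k) with hC
  have hbal : Sp.card + q = Sm.card + p := γ.balance
  have hA : γ.plusSet.card = Sp.card + C.card := by
    rw [plusSet, Finset.filter_or, Finset.card_union_of_disjoint]
    rw [Finset.disjoint_left]
    intro k hk1 hk2
    simp only [Finset.mem_filter] at hk1 hk2
    obtain ⟨j, hj, _⟩ := hk2.2
    rw [hk1.2] at hj
    exact absurd hj (by simp)
  have hCO : C.card = O.card := by
    apply Finset.card_bij' (fun k _ => mateF γ k) (fun k _ => mateF γ k)
    · intro k hk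
      simp only [hC, hO, Finset.mem_filter, Finset.mem_univ, true_and] at hk ⊢
      obtain ⟨j, hj, hjk⟩ := hk
      rw [mateF_eq_of_inl γ hj]
      exact ⟨k, γ.mate_invol _ _ hj, hjk⟩
    · intro k hk
      simp only [hC, hO, Finset.mem_filter, Finset.mem_univ, true_and] at hk ⊢
      obtain ⟨j, hj, hkj⟩ := hk
      rw [mateF_eq_of_inl γ hj]
      exact ⟨k, γ.mate_invol _ _ hj, hkj⟩
    · intro k _; exact mateF_invol γ k
    · intro k _; exact mateF_invol γ k
  have htot : Sp.card + Sm.card + O.card + C.card = p + q := by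
    have h1 := Finset.card_filter_add_card_filter_not
      (s := (univ : Finset (Fin (p + q)))) (p := fun k => γ.symbol k = Sum.inr true)
    have h2 := Finset.card_filter_add_card_filter_not
      (s := (univ.filter fun k => ¬ γ.symbol k = Sum.inr true))
      (p := fun k => γ.symbol k = Sum.inr false)
    have h3 := Finset.card_filter_add_card_filter_not
      (s := ((univ.filter fun k => ¬ γ.symbol k = Sum.inr true).filter
        fun k => ¬ γ.symbol k = Sum.inr false))
      (p := fun k => ∃ j, γ.symbol k = Sum.inl j ∧ k < j)
    have e2 : ((univ.filter fun k => ¬ γ.symbol k = Sum.inr true).filter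
        fun k => γ.symbol k = Sum.inr false) = Sm := by
      ext k
      rcases h : γ.symbol k with j | b
      · simp [hSm, h]
      · cases b <;> simp [hSm, h]
    have e3 : (((univ.filter fun k => ¬ γ.symbol k = Sum.inr true).filter
        fun k => ¬ γ.symbol k = Sum.inr false).filter
        fun k => ∃ j, γ.symbol k = Sum.inl j ∧ k < j) = O := by
      ext k
      rcases h : γ.symbol k with j | b
      · simp [hO, h]
      · cases b <;> simp [hO, h]
    have e4 : (((univ.filter fun k => ¬ γ.symbol k = Sum.inr true).filter
        fun k => ¬ γ.symbol k = Sum.inr false).filter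
        fun k => ¬ ∃ j, γ.symbol k = Sum.inl j ∧ k < j) = C := by
      ext k
      rcases h : γ.symbol k with j | b
      · have hne : j.val ≠ k.val := fun hc => γ.mate_ne _ _ h (Fin.ext hc)
        simp only [hC, Finset.mem_filter, Finset.mem_univ, true_and, h]
        constructor
        · rintro ⟨-, hnj⟩
          refine ⟨j, rfl, ?_⟩
          have hnk : ¬ k < j := fun hc => hnj ⟨j, rfl, hc⟩
          rcases lt_trichotomy j k with hh | hh | hh
          · exact hh
          · exact absurd (congrArg Fin.val hh) hne
          · exact absurd hh hnk
        · rintro ⟨j1, hj1, hlt⟩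
          rw [Sum.inl.injEq] at hj1
          subst hj1
          refine ⟨⟨by simp, by simp⟩, ?_⟩
          rintro ⟨j2, hj2, hk2⟩
          rw [Sum.inl.injEq] at hj2
          subst hj2
          exact absurd (lt_trans hlt hk2) (lt_irrefl _)
      · cases b <;> simp [hC, h]
    rw [e2] at h2
    rw [e3, e4] at h3
    have hcu : (univ : Finset (Fin (p + q))).card = p + q := by
      rw [Finset.card_univ, Fintype.card_fin]
    rw [hcu] at h1
    have hsp : (univ.filter fun k => γ.symbol k = Sum.inr true) = Sp := by rw [hSp]
    rw [hsp] at h1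
    omega
  omega

end Aux2

namespace Aux4
open Aux Aux3 Aux2

lemma rank_split {n : ℕ} (w : Equiv.Perm (Fin n)) (i j : ℕ) (A : Finset (Fin n)) :
    rankMatrix w i j = (A.filter fun k => k.val < i ∧ (w k).val < j).card
      + ((univ.filter fun k => k ∉ A).filter fun k => k.val < i ∧ (w k).val < j).card := by
  classical
  have e1 : ((univ.filter fun k : Fin n => k.val < i ∧ (w k).val < j).filter
      fun k => k ∈ A) = A.filter fun k => k.val < i ∧ (w k).val < j := by
    ext k
    simp only [Finset.mem_filter, Finset.mem_univ, true_and]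
    tauto
  have e2 : ((univ.filter fun k : Fin n => k.val < i ∧ (w k).val < j).filter
      fun k => ¬ k ∈ A) = (univ.filter fun k => k ∉ A).filter
        fun k => k.val < i ∧ (w k).val < j := by
    ext k
    simp only [Finset.mem_filter, Finset.mem_univ, true_and]
    tauto
  rw [rankMatrix, ← Finset.card_filter_add_card_filter_not
    (s := univ.filter fun k : Fin n => k.val < i ∧ (w k).val < j) (p := fun k => k ∈ A),
    e1, e2]

lemma prefix_split {n : ℕ} (i : ℕ) (hi : i ≤ n) (A : Finset (Fin n)) :
    (A.filter fun k => k.val < i).card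
      + ((univ.filter fun k => k ∉ A).filter fun k => k.val < i).card = i := by
  classical
  have e1 : ((univ.filter fun k : Fin n => k.val < i).filter fun k => k ∈ A)
      = A.filter fun k => k.val < i := by
    ext k
    simp only [Finset.mem_filter, Finset.mem_univ, true_and]
    tauto
  have e2 : ((univ.filter fun k : Fin n => k.val < i).filter fun k => ¬ k ∈ A)
      = (univ.filter fun k => k ∉ A).filter fun k => k.val < i := by
    ext k
    simp only [Finset.mem_filter, Finset.mem_univ, true_and]
    tauto
  have h := Finset.card_filter_add_card_filter_not
    (s := univ.filter fun k : Fin n => k.val < i) (p := fun k => k ∈ A)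
  rw [e1, e2, prefix_card (n := n) i hi] at h
  exact h

lemma card_compl_set {n : ℕ} (A : Finset (Fin n)) :
    A.card + (univ.filter fun k => k ∉ A).card = n := by
  classical
  have h := Finset.card_filter_add_card_filter_not
    (s := (univ : Finset (Fin n))) (p := fun k => k ∈ A)
  have e : (univ.filter fun k : Fin n => k ∈ A) = A := by
    ext k; simp
  rw [e, Finset.card_univ, Fintype.card_fin] at h
  exact h


lemma count_part {n : ℕ} (A : Finset (Fin n)) (i j c : ℕ) (f : Fin n → Fin n)
    (hf : ∀ k ∈ A, (f k).val + 1 + Aux.rk A k = c) :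
    (A.filter fun k => k.val < i ∧ (f k).val < j).card
      = (A.filter fun k => k.val < i).card - (c - j) := by
  classical
  have e : (A.filter fun k => k.val < i ∧ (f k).val < j)
      = A.filter fun k => k.val < i ∧ (c ≤ j + Aux.rk A k) := by
    apply Finset.filter_congr
    intro k hk
    have h1 := hf k hk
    constructor <;> rintro ⟨h3, h4⟩ <;> exact ⟨h3, by omega⟩
  rw [e, Aux.count_rk A i (fun r => c ≤ j + r), Aux3.count_ge]

lemma count_part2 {n : ℕ} (A : Finset (Fin n)) (i j c : ℕ) (f : Fin n → Fin n)
    (hf : ∀ k ∈ A, (f k).val = c + Aux.rk A k) :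
    (A.filter fun k => k.val < i ∧ (f k).val < j).card
      = min (A.filter fun k => k.val < i).card (j - c) := by
  classical
  have e : (A.filter fun k => k.val < i ∧ (f k).val < j)
      = A.filter fun k => k.val < i ∧ (c + Aux.rk A k < j) := by
    apply Finset.filter_congr
    intro k hk
    have h1 := hf k hk
    constructor <;> rintro ⟨h3, h4⟩ <;> exact ⟨h3, by omega⟩
  rw [e, Aux.count_rk A i (fun r => c + r < j), Aux3.count_lt']

end Aux4

/-- For every `(p,q)`-clan `γ`, `v(γ) ≤ u(γ)` in the Bruhat
order: `r_{v(γ)}(i,j) ≥ r_{u(γ)}(i,j)` for all `i,j ∈ {1,…,n}`. -/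
theorem vPerm_le_uPerm {p q : ℕ} (hn : 1 ≤ p + q) (γ : Clan p q)
    (u v : Equiv.Perm (Fin (p + q))) (hu : IsUPerm γ u) (hv : IsVPerm γ v) :
    ∀ i j : ℕ, 1 ≤ i → i ≤ p + q → 1 ≤ j → j ≤ p + q →
      rankMatrix u i j ≤ rankMatrix v i j := by
  classical
  intro i j hi1 hi2 hj1 hj2
  have h1 : ∀ k ∈ γ.plusSet, (u k).val + 1 + Aux.rk γ.plusSet k = p :=
    fun k hk => (hu k).1 hk
  have h2 : ∀ k ∈ (univ.filter fun k : Fin (p + q) => k ∉ γ.plusSet),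
      (u k).val + 1 + Aux.rk (univ.filter fun k : Fin (p + q) => k ∉ γ.plusSet) k = p + q := by
    intro k hk
    have hk' : k ∉ γ.plusSet := (Finset.mem_filter.mp hk).2
    have h := (hu k).2 hk'
    have hrk : Aux.rk (univ.filter fun k : Fin (p + q) => k ∉ γ.plusSet) k
        = (univ.filter fun j => j ∉ γ.plusSet ∧ j < k).card := by
      rw [Aux.rk_def, Finset.filter_filter]
    omega
  have h3 : ∀ k ∈ γ.tplusSet, (v k).val = 0 + Aux.rk γ.tplusSet k := by
    intro k hk
    have := (hv k).1 hk
    have hrk : Aux.rk γ.tplusSet k = (γ.tplusSet.filter fun j => j < k).card := rfl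
    omega
  have h4 : ∀ k ∈ (univ.filter fun k : Fin (p + q) => k ∉ γ.tplusSet),
      (v k).val = p + Aux.rk (univ.filter fun k : Fin (p + q) => k ∉ γ.tplusSet) k := by
    intro k hk
    have hk' : k ∉ γ.tplusSet := (Finset.mem_filter.mp hk).2
    have h := (hv k).2 hk'
    have hrk : Aux.rk (univ.filter fun k : Fin (p + q) => k ∉ γ.tplusSet) k
        = (univ.filter fun j => j ∉ γ.tplusSet ∧ j < k).card := by
      rw [Aux.rk_def, Finset.filter_filter]
    omega
  have ru : rankMatrix u i j
      = ((γ.plusSet.filter fun k => k.val < i).card - (p - j))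
        + (((univ.filter fun k : Fin (p + q) => k ∉ γ.plusSet).filter
            fun k => k.val < i).card - (p + q - j)) := by
    rw [Aux4.rank_split u i j γ.plusSet,
      Aux4.count_part γ.plusSet i j p _ h1,
      Aux4.count_part _ i j (p + q) _ h2]
  have rv : rankMatrix v i j
      = min (γ.tplusSet.filter fun k => k.val < i).card (j - 0)
        + min ((univ.filter fun k : Fin (p + q) => k ∉ γ.tplusSet).filter
            fun k => k.val < i).card (j - p) := by
    rw [Aux4.rank_split v i j γ.tplusSet,
      Aux4.count_part2 γ.tplusSet i j 0 _ h3,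
      Aux4.count_part2 _ i j p _ h4]
  have hsplitA := Aux4.prefix_split i hi2 γ.plusSet
  have hsplitB := Aux4.prefix_split i hi2 γ.tplusSet
  have hcardA : γ.plusSet.card = p := Aux2.card_plusSet γ
  have hcomp := Aux4.card_compl_set γ.plusSet
  have haA : (γ.plusSet.filter fun k => k.val < i).card ≤ γ.plusSet.card :=
    Finset.card_le_card (Finset.filter_subset _ _)
  have ha'A : ((univ.filter fun k : Fin (p + q) => k ∉ γ.plusSet).filter
      fun k => k.val < i).card ≤ (univ.filter fun k : Fin (p + q) => k ∉ γ.plusSet).card :=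
    Finset.card_le_card (Finset.filter_subset _ _)
  have hab := Aux2.card_plus_prefix_le γ i
  omega
end
end
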